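/- arXiv:1404.1754 — 6 statements merged into one kernel-verified Lean document; each statement's English description precedes it below -/
import Mathlib

section
/- The bilinear form ω(X,Y) = tr(X[D,Y]) on the Lie algebra 𝔤 of bounded skew-adjoint operators X with [D,X] Hilbert–Schmidt is a Lie algebra 2-cocycle: it is skew-symmetric and satisfies ω(X,[Y,Z]) + ω(Y,[Z,X]) + ω(Z,[X,Y]) = 0 for all X,Y,Z ∈ 𝔤. -/
set_option maxHeartbeats 2000000

noncomputable section

open scoped ENNReal ComplexConjugate

/-- The Hilbert space `ℓ²(ℤ, ℂ)` with orthonormal basis `(e n)_{n ∈ ℤ}`. -/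
abbrev H : Type := lp (fun _ : ℤ => ℂ) 2

/-- The standard orthonormal basis vectors. -/
def e (n : ℤ) : H := lp.single 2 n (1 : ℂ)

/-- The matrix entry `⟨e i, X (e j)⟩` of a bounded operator. -/
def entry (X : H →L[ℂ] H) (i j : ℤ) : ℂ := inner ℂ (e i) (X (e j))

/-- The matrix entry of the commutator `[D, X]`, where `D e_n = n e_n`:
`([D,X])_{ij} = (i - j) X_{ij}`. -/
def commDEntry (X : H →L[ℂ] H) (i j : ℤ) : ℂ := ((i : ℂ) - (j : ℂ)) * entry X i j

/-- Membership in the Lie algebra `𝔤`: bounded skew-adjoint operators `X`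
with `[D, X]` Hilbert–Schmidt (square-summable matrix entries). -/
def InG (X : H →L[ℂ] H) : Prop :=
  ContinuousLinearMap.adjoint X = -X ∧
    Summable (fun p : ℤ × ℤ => ‖commDEntry X p.1 p.2‖ ^ 2)

/-- The conditional trace `ω(X,Y) = tr_c (X [D,Y])`, computed in the basis `(e n)`. -/
def omegaCocycle (X Y : H →L[ℂ] H) : ℂ :=
  ∑' n : ℤ, ∑' m : ℤ, entry X n m * commDEntry Y m n

lemma inner_e (v : H) (n : ℤ) : (inner ℂ (e n) v : ℂ) = v n := by
  rw [e, lp.inner_single_left]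
  simp [RCLike.inner_apply]

lemma entry_eq (X : H →L[ℂ] H) (n m : ℤ) : entry X n m = (X (e m)) n := inner_e _ _

lemma entry_adjoint (X : H →L[ℂ] H) (n m : ℤ) :
    entry (ContinuousLinearMap.adjoint X) n m = conj (entry X m n) := by
  unfold entry
  rw [ContinuousLinearMap.adjoint_inner_right, ← inner_conj_symm]

lemma memℓp_two_of {f : ℤ → ℂ} (h : Summable fun k => ‖f k‖ ^ 2) : Memℓp f 2 := by
  refine memℓp_gen ?_
  convert h using 2 with k
  norm_num [Real.rpow_natCast]

lemma tsum_sq_coeff (v : H) : ∑' k, ‖v k‖ ^ 2 = ‖v‖ ^ 2 := by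
  have h := lp.norm_rpow_eq_tsum (p := 2) (by norm_num) v
  have h2 : ((2:ℝ≥0∞)).toReal = (2:ℝ) := by norm_num
  rw [h2] at h
  have e1 : ∀ x : ℝ, x ^ (2:ℝ) = x ^ 2 := fun x => by
    rw [show (2:ℝ) = ((2:ℕ):ℝ) by norm_num, Real.rpow_natCast]
  simp only [e1] at h
  exact h.symm

lemma summable_sq_coeff (v : H) : Summable fun k => ‖v k‖ ^ 2 := by
  have h := (lp.memℓp v).summable (p := 2) (by norm_num)
  convert h using 2 with k
  norm_num [Real.rpow_natCast]

lemma summable_sq_col (X : H →L[ℂ] H) (j : ℤ) : Summable fun n => ‖entry X n j‖ ^ 2 := by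
  have h := summable_sq_coeff (X (e j))
  refine h.congr fun n => ?_
  rw [entry_eq]

lemma summable_sq_row (X : H →L[ℂ] H) (n : ℤ) : Summable fun m => ‖entry X n m‖ ^ 2 := by
  have h := summable_sq_col (ContinuousLinearMap.adjoint X) n
  refine h.congr fun m => ?_
  rw [entry_adjoint]
  simp

lemma single_eq_smul (k : ℤ) (c : ℂ) : lp.single 2 k c = c • e k := by
  rw [e, ← lp.single_smul]
  norm_num

lemma hasSum_entry_apply (X : H →L[ℂ] H) (v : H) (n : ℤ) :
    HasSum (fun k => v k * entry X n k) ((inner ℂ (e n) (X v) : ℂ)) := by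
  have h := lp.hasSum_single ENNReal.ofNat_ne_top v
  have h2 := ((innerSL ℂ (e n)).comp X).hasSum h
  refine h2.congr_fun fun k => ?_
  rw [single_eq_smul]
  simp [entry]

lemma hasSum_entry_mul (Y Z : H →L[ℂ] H) (n m : ℤ) :
    HasSum (fun k => entry Y n k * entry Z k m) (entry (Y * Z) n m) := by
  have h := hasSum_entry_apply Y (Z (e m)) n
  have : entry (Y * Z) n m = (inner ℂ (e n) (Y (Z (e m))) : ℂ) := rfl
  rw [this]
  refine h.congr_fun fun k => ?_
  rw [← entry_eq, mul_comm]

lemma entry_sub (A B : H →L[ℂ] H) (n m : ℤ) : entry (A - B) n m = entry A n m - entry B n m := by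
  simp [entry, inner_sub_right]

lemma norm_e (n : ℤ) : ‖e n‖ = 1 := by
  have h := lp.norm_single (p := 2) (E := fun _ : ℤ => ℂ) (by norm_num : (0:ℝ≥0∞) < 2) n (1:ℂ)
  rw [e]
  simpa using h

lemma entry_bound (X : H →L[ℂ] H) (n m : ℤ) : ‖entry X n m‖ ≤ ‖X‖ := by
  calc ‖entry X n m‖ ≤ ‖e n‖ * ‖X (e m)‖ := norm_inner_le_norm _ _
  _ ≤ ‖e n‖ * (‖X‖ * ‖e m‖) := by
      gcongr
      exact X.le_opNorm _
  _ = ‖X‖ := by rw [norm_e, norm_e]; ring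

/-! ### Matrix-level definitions -/

def HSm (a : ℤ → ℤ → ℂ) : Prop := Summable fun p : ℤ × ℤ => ‖a p.1 p.2‖ ^ 2

def mm (a b : ℤ → ℤ → ℂ) (n m : ℤ) : ℂ := ∑' k, a n k * b k m

def od (a : ℤ → ℤ → ℂ) (n m : ℤ) : ℂ := if n = m then 0 else a n m

def dm (a : ℤ → ℤ → ℂ) (n m : ℤ) : ℂ := ((n : ℂ) - (m : ℂ)) * a n m

def tr2 (a b : ℤ → ℤ → ℂ) : ℂ := ∑' p : ℤ × ℤ, a p.1 p.2 * b p.2 p.1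

lemma HSm.row {a : ℤ → ℤ → ℂ} (h : HSm a) (n : ℤ) : Summable fun m => ‖a n m‖ ^ 2 :=
  h.prod_factor n

lemma HSm.col {a : ℤ → ℤ → ℂ} (h : HSm a) (m : ℤ) : Summable fun n => ‖a n m‖ ^ 2 := by
  have h2 : Summable fun p : ℤ × ℤ => ‖a p.2 p.1‖ ^ 2 := h.prod_symm
  exact h2.prod_factor m

lemma HSm.rowsums {a : ℤ → ℤ → ℂ} (h : HSm a) : Summable fun n => ∑' m, ‖a n m‖ ^ 2 :=
  ((summable_prod_of_nonneg (fun p => by positivity)).mp h).2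

lemma HSm.colsums {a : ℤ → ℤ → ℂ} (h : HSm a) : Summable fun m => ∑' n, ‖a n m‖ ^ 2 := by
  have h2 : Summable fun p : ℤ × ℤ => ‖a p.2 p.1‖ ^ 2 := h.prod_symm
  exact ((summable_prod_of_nonneg (fun p => by positivity)).mp h2).2

/-- Cauchy–Schwarz-free product summability (AM–GM). -/
lemma summable_mul_of_sq {α : Type*} {f g : α → ℝ} (hf : Summable fun i => f i ^ 2)
    (hg : Summable fun i => g i ^ 2) (h0f : ∀ i, 0 ≤ f i) (h0g : ∀ i, 0 ≤ g i) :
    Summable fun i => f i * g i := by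
  refine Summable.of_nonneg_of_le (fun i => mul_nonneg (h0f i) (h0g i)) (fun i => ?_)
    (((hf.add hg).mul_left (1/2 : ℝ)))
  have := sq_nonneg (f i - g i)
  simp only [one_div]
  nlinarith

/-- Cauchy–Schwarz for tsums of nonnegative reals. -/
lemma tsum_mul_le_sqrt {α : Type*} {f g : α → ℝ} (hf : Summable fun i => f i ^ 2)
    (hg : Summable fun i => g i ^ 2) (h0f : ∀ i, 0 ≤ f i) (h0g : ∀ i, 0 ≤ g i) :
    ∑' i, f i * g i ≤ Real.sqrt (∑' i, f i ^ 2) * Real.sqrt (∑' i, g i ^ 2) := by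
  refine Summable.tsum_le_of_sum_le (summable_mul_of_sq hf hg h0f h0g) (fun s => ?_)
  have h1 : (∑ i ∈ s, f i * g i) ^ 2 ≤ (∑ i ∈ s, f i ^ 2) * ∑ i ∈ s, g i ^ 2 :=
    Finset.sum_mul_sq_le_sq_mul_sq s f g
  have h2 : (∑ i ∈ s, f i ^ 2) ≤ ∑' i, f i ^ 2 :=
    Summable.sum_le_tsum s (fun i _ => by positivity) hf
  have h3 : (∑ i ∈ s, g i ^ 2) ≤ ∑' i, g i ^ 2 :=
    Summable.sum_le_tsum s (fun i _ => by positivity) hg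
  have h4 : (0:ℝ) ≤ ∑ i ∈ s, f i * g i :=
    Finset.sum_nonneg fun i _ => mul_nonneg (h0f i) (h0g i)
  have h5 : (∑ i ∈ s, f i * g i) ^ 2 ≤ (∑' i, f i ^ 2) * ∑' i, g i ^ 2 := by
    refine h1.trans ?_
    have : (0:ℝ) ≤ ∑ i ∈ s, g i ^ 2 := Finset.sum_nonneg fun i _ => by positivity
    nlinarith [(tsum_nonneg (fun i => sq_nonneg (f i)) : (0:ℝ) ≤ ∑' i, f i ^ 2), (tsum_nonneg (fun i => sq_nonneg (g i)) : (0:ℝ) ≤ ∑' i, g i ^ 2)]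
  calc (∑ i ∈ s, f i * g i) = Real.sqrt ((∑ i ∈ s, f i * g i)^2) := (Real.sqrt_sq h4).symm
    _ ≤ Real.sqrt ((∑' i, f i ^ 2) * ∑' i, g i ^ 2) := Real.sqrt_le_sqrt h5
    _ = _ := Real.sqrt_mul (tsum_nonneg fun i => sq_nonneg (f i)) _

/-- The pairing of two Hilbert–Schmidt matrices is absolutely summable. -/
lemma hs_pair_summable {a b : ℤ → ℤ → ℂ} (ha : HSm a) (hb : HSm b) :
    Summable fun p : ℤ × ℤ => ‖a p.1 p.2 * b p.2 p.1‖ := by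
  have hb' : Summable fun p : ℤ × ℤ => ‖b p.2 p.1‖ ^ 2 := hb.prod_symm
  refine (summable_mul_of_sq ha hb' (fun p => norm_nonneg _) (fun p => norm_nonneg _)).congr
    fun p => ?_
  rw [norm_mul]

lemma hs_pair_summable' {a b : ℤ → ℤ → ℂ} (ha : HSm a) (hb : HSm b) :
    Summable fun p : ℤ × ℤ => a p.1 p.2 * b p.2 p.1 :=
  (hs_pair_summable ha hb).of_norm

lemma tr2_comm (a b : ℤ → ℤ → ℂ) : tr2 a b = tr2 b a := by
  rw [tr2, tr2, ← (Equiv.prodComm ℤ ℤ).tsum_eq]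
  exact tsum_congr fun p => mul_comm _ _

/-! ### Vectors from square-summable coefficients -/

def vecOf (f : ℤ → ℂ) (h : Summable fun k => ‖f k‖ ^ 2) : H := ⟨f, memℓp_two_of h⟩

lemma vecOf_apply (f : ℤ → ℂ) (h : Summable fun k => ‖f k‖ ^ 2) (k : ℤ) :
    (vecOf f h) k = f k := rfl

lemma norm_sq_vecOf (f : ℤ → ℂ) (h : Summable fun k => ‖f k‖ ^ 2) :
    ‖vecOf f h‖ ^ 2 = ∑' k, ‖f k‖ ^ 2 := (tsum_sq_coeff _).symm

lemma apply_vecOf_coeff (Z : H →L[ℂ] H) (f : ℤ → ℂ) (h : Summable fun k => ‖f k‖ ^ 2) (n : ℤ) :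
    (Z (vecOf f h)) n = ∑' k, f k * entry Z n k := by
  rw [← inner_e]
  exact (hasSum_entry_apply Z _ n).tsum_eq.symm

lemma adjoint_vecOf_coeff (Z : H →L[ℂ] H) (f : ℤ → ℂ) (h : Summable fun k => ‖f k‖ ^ 2) (m : ℤ) :
    conj (((ContinuousLinearMap.adjoint Z) (vecOf f h)) m) = ∑' k, conj (f k) * entry Z k m := by
  have h1 : ((ContinuousLinearMap.adjoint Z) (vecOf f h)) m
      = (inner ℂ (Z (e m)) (vecOf f h) : ℂ) := by
    rw [← inner_e]
    rw [ContinuousLinearMap.adjoint_inner_right]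
  rw [h1, ← inner_conj_symm, lp.inner_eq_tsum]
  simp only [Complex.conj_conj]
  refine tsum_congr fun k => ?_
  rw [RCLike.inner_apply, vecOf_apply, entry_eq, mul_comm]

/-! ### Hilbert–Schmidt closure properties -/

lemma HSm.of_le' {a b : ℤ → ℤ → ℂ} (hb : HSm b) (h : ∀ n m, ‖a n m‖ ≤ ‖b n m‖) : HSm a := by
  refine Summable.of_nonneg_of_le (fun p => by positivity) (fun p => ?_) hb
  exact pow_le_pow_left₀ (norm_nonneg _) (h p.1 p.2) 2

lemma HSm.addm {a b : ℤ → ℤ → ℂ} (ha : HSm a) (hb : HSm b) :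
    HSm (fun n m => a n m + b n m) := by
  refine Summable.of_nonneg_of_le (fun p => by positivity) (fun p => ?_)
    (((ha.add hb)).mul_left 2)
  have h1 : ‖a p.1 p.2 + b p.1 p.2‖ ≤ ‖a p.1 p.2‖ + ‖b p.1 p.2‖ := norm_add_le _ _
  have h2 : ‖a p.1 p.2 + b p.1 p.2‖ ^ 2 ≤ (‖a p.1 p.2‖ + ‖b p.1 p.2‖) ^ 2 := by
    exact pow_le_pow_left₀ (norm_nonneg _) h1 2
  nlinarith [sq_nonneg (‖a p.1 p.2‖ - ‖b p.1 p.2‖)]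

lemma HSm.subm {a b : ℤ → ℤ → ℂ} (ha : HSm a) (hb : HSm b) :
    HSm (fun n m => a n m - b n m) := by
  have hb' : HSm (fun n m => -b n m) := hb.of_le' (fun n m => by simp)
  have := ha.addm hb'
  exact this.of_le' (fun n m => by simp [sub_eq_add_neg])

lemma hs_opl (Z : H →L[ℂ] H) {b : ℤ → ℤ → ℂ} (hb : HSm b) : HSm (mm (entry Z) b) := by
  have key : ∀ n m, mm (entry Z) b n m = (Z (vecOf (fun k => b k m) (hb.col m))) n := by
    intro n m
    rw [apply_vecOf_coeff, mm]
    exact tsum_congr fun k => mul_comm _ _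
  have G : Summable fun q : ℤ × ℤ => ‖mm (entry Z) b q.2 q.1‖ ^ 2 := by
    refine (summable_prod_of_nonneg (fun p => by positivity)).mpr ⟨fun m => ?_, ?_⟩
    · exact (summable_sq_coeff (Z (vecOf (fun k => b k m) (hb.col m)))).congr
        fun n => by rw [key n m]
    · refine Summable.of_nonneg_of_le (fun m => tsum_nonneg fun n => by positivity)
        (fun m => ?_) ((hb.colsums.mul_left (‖Z‖ ^ 2)))
      have h1 : ∑' n, ‖mm (entry Z) b n m‖ ^ 2
          = ‖Z (vecOf (fun k => b k m) (hb.col m))‖ ^ 2 := by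
        rw [← tsum_sq_coeff]
        exact tsum_congr fun n => by rw [key n m]
      rw [h1]
      have h2 : ‖Z (vecOf (fun k => b k m) (hb.col m))‖ ≤ ‖Z‖ * ‖vecOf (fun k => b k m) (hb.col m)‖ :=
        Z.le_opNorm _
      have h3 : ‖Z (vecOf (fun k => b k m) (hb.col m))‖ ^ 2
          ≤ ‖Z‖ ^ 2 * ‖vecOf (fun k => b k m) (hb.col m)‖ ^ 2 := by
        rw [← mul_pow]; exact pow_le_pow_left₀ (norm_nonneg _) h2 2
      calc ‖Z (vecOf (fun k => b k m) (hb.col m))‖ ^ 2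
          ≤ ‖Z‖ ^ 2 * ‖vecOf (fun k => b k m) (hb.col m)‖ ^ 2 := h3
        _ = ‖Z‖ ^ 2 * ∑' n, ‖b n m‖ ^ 2 := by rw [norm_sq_vecOf]
  exact G.prod_symm

lemma conj_row_summable {a : ℤ → ℤ → ℂ} (ha : HSm a) (n : ℤ) :
    Summable fun k => ‖conj (a n k)‖ ^ 2 :=
  (ha.row n).congr fun k => by simp

lemma mm_entry_right_eq (Z : H →L[ℂ] H) {a : ℤ → ℤ → ℂ} (ha : HSm a) (n m : ℤ) :
    mm a (entry Z) n m
      = conj (((ContinuousLinearMap.adjoint Z) (vecOf (fun k => conj (a n k)) (conj_row_summable ha n))) m) := by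
  rw [adjoint_vecOf_coeff, mm]
  exact tsum_congr fun k => by simp

lemma hs_opr (Z : H →L[ℂ] H) {a : ℤ → ℤ → ℂ} (ha : HSm a) : HSm (mm a (entry Z)) := by
  set W := ContinuousLinearMap.adjoint Z with hW
  refine (summable_prod_of_nonneg (fun p => by positivity)).mpr ⟨fun n => ?_, ?_⟩
  · refine (summable_sq_coeff (W (vecOf (fun k => conj (a n k)) (conj_row_summable ha n)))).congr
      fun m => ?_
    rw [mm_entry_right_eq Z ha n m]
    simp [hW]
  · refine Summable.of_nonneg_of_le (fun n => tsum_nonneg fun m => by positivity)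
      (fun n => ?_) ((ha.rowsums.mul_left (‖W‖ ^ 2)))
    have h1 : ∑' m, ‖mm a (entry Z) n m‖ ^ 2
        = ‖W (vecOf (fun k => conj (a n k)) (conj_row_summable ha n))‖ ^ 2 := by
      rw [← tsum_sq_coeff]
      refine tsum_congr fun m => ?_
      rw [mm_entry_right_eq Z ha n m]
      simp [hW]
    rw [h1]
    have h2 : ‖W (vecOf (fun k => conj (a n k)) (conj_row_summable ha n))‖ ^ 2
        ≤ ‖W‖ ^ 2 * ‖vecOf (fun k => conj (a n k)) (conj_row_summable ha n)‖ ^ 2 := by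
      rw [← mul_pow]; exact pow_le_pow_left₀ (norm_nonneg _) (W.le_opNorm _) 2
    refine h2.trans ?_
    rw [norm_sq_vecOf]
    refine le_of_eq ?_
    congr 1
    exact tsum_congr fun k => by simp

lemma HSm.of_bound {a b : ℤ → ℤ → ℂ} (hb : HSm b) (K : ℝ)
    (h : ∀ n m, ‖a n m‖ ≤ K * ‖b n m‖) : HSm a := by
  refine Summable.of_nonneg_of_le (fun p => by positivity) (fun p => ?_) (Summable.mul_left (K ^ 2) hb)
  calc ‖a p.1 p.2‖ ^ 2 ≤ (K * ‖b p.1 p.2‖) ^ 2 := pow_le_pow_left₀ (norm_nonneg _) (h p.1 p.2) 2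
    _ = K ^ 2 * ‖b p.1 p.2‖ ^ 2 := by ring

lemma HSm.mul_hs {a b : ℤ → ℤ → ℂ} (ha : HSm a) (hb : HSm b) : HSm (mm a b) := by
  have key : ∀ n m, ‖mm a b n m‖ ^ 2 ≤ (∑' k, ‖a n k‖ ^ 2) * (∑' k, ‖b k m‖ ^ 2) := by
    intro n m
    have h0 : Summable fun k => ‖a n k * b k m‖ := by
      refine (summable_mul_of_sq (ha.row n) (hb.col m) (fun k => norm_nonneg _)
        (fun k => norm_nonneg _)).congr fun k => ?_
      rw [norm_mul]
    have h1 : ‖mm a b n m‖ ≤ ∑' k, ‖a n k‖ * ‖b k m‖ := by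
      rw [mm]
      refine (norm_tsum_le_tsum_norm h0).trans_eq (tsum_congr fun k => norm_mul _ _)
    have h2 := tsum_mul_le_sqrt (ha.row n) (hb.col m) (fun k => norm_nonneg _)
      (fun k => norm_nonneg _)
    have h3 : ‖mm a b n m‖ ≤ Real.sqrt (∑' k, ‖a n k‖ ^ 2) * Real.sqrt (∑' k, ‖b k m‖ ^ 2) :=
      h1.trans h2
    have h4 : ‖mm a b n m‖ ^ 2
        ≤ (Real.sqrt (∑' k, ‖a n k‖ ^ 2) * Real.sqrt (∑' k, ‖b k m‖ ^ 2)) ^ 2 :=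
      pow_le_pow_left₀ (norm_nonneg _) h3 2
    refine h4.trans_eq ?_
    rw [mul_pow, Real.sq_sqrt (tsum_nonneg fun k => sq_nonneg _),
      Real.sq_sqrt (tsum_nonneg fun k => sq_nonneg _)]
  refine Summable.of_nonneg_of_le (fun p => by positivity) (fun p => key p.1 p.2) ?_
  exact ha.rowsums.mul_of_nonneg hb.colsums (fun n => tsum_nonneg fun k => sq_nonneg _)
    (fun m => tsum_nonneg fun k => sq_nonneg _)

/-! ### off-diagonal and `dm` -/

lemma od_norm_le {a : ℤ → ℤ → ℂ} (n m : ℤ) : ‖od a n m‖ ≤ ‖a n m‖ := by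
  rw [od]; split <;> simp

lemma gap_norm (n m : ℤ) (hnm : n ≠ m) : (1:ℝ) ≤ ‖((n:ℂ) - (m:ℂ))‖ := by
  have h1 : ((n:ℂ) - (m:ℂ)) = ((n - m : ℤ) : ℂ) := by push_cast; ring
  rw [h1]
  rw [Complex.norm_intCast]
  have : (1:ℤ) ≤ |n - m| := Int.one_le_abs (sub_ne_zero.mpr hnm)
  calc (1:ℝ) = ((1:ℤ):ℝ) := by norm_num
    _ ≤ |((n - m : ℤ) : ℝ)| := by rw [← Int.cast_abs]; exact_mod_cast this

lemma od_le_comm (X : H →L[ℂ] H) (n m : ℤ) :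
    ‖od (entry X) n m‖ ≤ ‖commDEntry X n m‖ := by
  by_cases h : n = m
  · simp [od, h]
  · rw [od, if_neg h, commDEntry, norm_mul]
    nth_rewrite 1 [← one_mul ‖entry X n m‖]
    exact mul_le_mul_of_nonneg_right (gap_norm n m h) (norm_nonneg _)

lemma hs_od (X : H →L[ℂ] H) (h : HSm (commDEntry X)) : HSm (od (entry X)) :=
  h.of_le' (od_le_comm X)

lemma dm_od_eq (X : H →L[ℂ] H) : dm (od (entry X)) = commDEntry X := by
  funext n m
  by_cases h : n = m
  · simp [dm, od, commDEntry, h]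
  · simp [dm, od, commDEntry, h]

lemma summable_sq_od_row (X : H →L[ℂ] H) (n : ℤ) :
    Summable fun m => ‖od (entry X) n m‖ ^ 2 :=
  Summable.of_nonneg_of_le (fun m => by positivity)
    (fun m => pow_le_pow_left₀ (norm_nonneg _) (od_norm_le n m) 2) (summable_sq_row X n)

/-! ### tr2 manipulation lemmas -/

lemma tr2_add_right {a b c : ℤ → ℤ → ℂ}
    (h1 : Summable fun p : ℤ × ℤ => a p.1 p.2 * b p.2 p.1)
    (h2 : Summable fun p : ℤ × ℤ => a p.1 p.2 * c p.2 p.1) :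
    tr2 a (fun n m => b n m + c n m) = tr2 a b + tr2 a c := by
  rw [tr2, tr2, tr2, ← Summable.tsum_add h1 h2]
  exact tsum_congr fun p => by ring

lemma tr2_sub_right {a b c : ℤ → ℤ → ℂ}
    (h1 : Summable fun p : ℤ × ℤ => a p.1 p.2 * b p.2 p.1)
    (h2 : Summable fun p : ℤ × ℤ => a p.1 p.2 * c p.2 p.1) :
    tr2 a (fun n m => b n m - c n m) = tr2 a b - tr2 a c := by
  rw [tr2, tr2, tr2, ← Summable.tsum_sub h1 h2]
  exact tsum_congr fun p => by ring

lemma tr2_add_left {a b c : ℤ → ℤ → ℂ}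
    (h1 : Summable fun p : ℤ × ℤ => a p.1 p.2 * c p.2 p.1)
    (h2 : Summable fun p : ℤ × ℤ => b p.1 p.2 * c p.2 p.1) :
    tr2 (fun n m => a n m + b n m) c = tr2 a c + tr2 b c := by
  rw [tr2, tr2, tr2, ← Summable.tsum_add h1 h2]
  exact tsum_congr fun p => by ring

lemma tr2_move (Y : H →L[ℂ] H) {a b : ℤ → ℤ → ℂ} (ha : HSm a) (hb : HSm b) :
    tr2 a (mm (entry Y) b) = tr2 (mm a (entry Y)) b := by
  have hYb : HSm (mm (entry Y) b) := hs_opl Y hb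
  have haY : HSm (mm a (entry Y)) := hs_opr Y ha
  rw [tr2, tr2, Summable.tsum_prod (hs_pair_summable' ha hYb), Summable.tsum_prod (hs_pair_summable' haY hb)]
  refine tsum_congr fun n => ?_
  set u := vecOf (fun m => conj (a n m)) (conj_row_summable ha n) with hu
  set v := vecOf (fun k => b k n) (hb.col n) with hv
  have h1 : ∀ m, mm (entry Y) b m n = (Y v) m := by
    intro m
    rw [hv, apply_vecOf_coeff, mm]
    exact tsum_congr fun k => mul_comm _ _
  have h2 : ∑' m, a n m * mm (entry Y) b m n = (inner ℂ u (Y v) : ℂ) := by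
    rw [lp.inner_eq_tsum]
    refine tsum_congr fun m => ?_
    rw [h1, RCLike.inner_apply, hu, vecOf_apply]
    simp
    exact mul_comm _ _
  have h3 : (inner ℂ u (Y v) : ℂ)
      = (inner ℂ ((ContinuousLinearMap.adjoint Y) u) v : ℂ) :=
    (ContinuousLinearMap.adjoint_inner_left Y v u).symm
  have h4 : (inner ℂ ((ContinuousLinearMap.adjoint Y) u) v : ℂ)
      = ∑' k, mm a (entry Y) n k * b k n := by
    rw [lp.inner_eq_tsum]
    refine tsum_congr fun k => ?_
    rw [RCLike.inner_apply, mm_entry_right_eq Y ha n k, hv, vecOf_apply]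
    exact mul_comm _ _
  rw [h2, h3, h4]

lemma tr2_move' (Z : H →L[ℂ] H) {a b : ℤ → ℤ → ℂ} (ha : HSm a) (hb : HSm b) :
    tr2 a (mm b (entry Z)) = tr2 (mm (entry Z) a) b := by
  rw [tr2_comm a (mm b (entry Z)), ← tr2_move Z hb ha, tr2_comm]

/-! ### Triple sums -/

lemma triple_summable {a b c : ℤ → ℤ → ℂ} (ha : HSm a) (hb : HSm b) (hc : HSm c) :
    Summable fun t : ℤ × ℤ × ℤ => ‖a t.1 t.2.1 * (b t.2.1 t.2.2 * c t.2.2 t.1)‖ := by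
  have sqb : Summable fun m => Real.sqrt (∑' k, ‖b m k‖ ^ 2) ^ 2 :=
    hb.rowsums.congr (fun m => (Real.sq_sqrt (tsum_nonneg fun k => sq_nonneg _)).symm)
  have sqa : Summable fun n => Real.sqrt (∑' m, ‖a n m‖ ^ 2) ^ 2 :=
    ha.rowsums.congr (fun n => (Real.sq_sqrt (tsum_nonneg fun k => sq_nonneg _)).symm)
  have sqc : Summable fun n => Real.sqrt (∑' k, ‖c k n‖ ^ 2) ^ 2 :=
    hc.colsums.congr (fun n => (Real.sq_sqrt (tsum_nonneg fun k => sq_nonneg _)).symm)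
  have hfib : ∀ n m, Summable fun k => ‖a n m‖ * (‖b m k‖ * ‖c k n‖) := fun n m =>
    (summable_mul_of_sq (hb.row m) (hc.col n) (fun k => norm_nonneg _)
      (fun k => norm_nonneg _)).mul_left (‖a n m‖)
  have hbound : ∀ n m, (∑' k, ‖a n m‖ * (‖b m k‖ * ‖c k n‖))
      ≤ (‖a n m‖ * Real.sqrt (∑' k, ‖b m k‖ ^ 2)) * Real.sqrt (∑' k, ‖c k n‖ ^ 2) := by
    intro n m
    rw [tsum_mul_left]
    have h1 : ∑' k, ‖b m k‖ * ‖c k n‖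
        ≤ Real.sqrt (∑' k, ‖b m k‖ ^ 2) * Real.sqrt (∑' k, ‖c k n‖ ^ 2) :=
      tsum_mul_le_sqrt (hb.row m) (hc.col n) (fun k => norm_nonneg _) (fun k => norm_nonneg _)
    calc ‖a n m‖ * ∑' k, ‖b m k‖ * ‖c k n‖
        ≤ ‖a n m‖ * (Real.sqrt (∑' k, ‖b m k‖ ^ 2) * Real.sqrt (∑' k, ‖c k n‖ ^ 2)) :=
          mul_le_mul_of_nonneg_left h1 (norm_nonneg _)
      _ = _ := by ring
  have hmaj : ∀ n, Summable fun m => ‖a n m‖ * Real.sqrt (∑' k, ‖b m k‖ ^ 2) := fun n =>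
    summable_mul_of_sq (ha.row n) sqb (fun m => norm_nonneg _) (fun m => Real.sqrt_nonneg _)
  have hsq : ∀ n, Summable fun q : ℤ × ℤ => ‖a n q.1‖ * (‖b q.1 q.2‖ * ‖c q.2 n‖) := by
    intro n
    refine (summable_prod_of_nonneg (fun q => by positivity)).mpr ⟨fun m => hfib n m, ?_⟩
    refine Summable.of_nonneg_of_le (fun m => tsum_nonneg fun k => by positivity)
      (fun m => hbound n m) (((hmaj n).mul_right (Real.sqrt (∑' k, ‖c k n‖ ^ 2))))
  have hout : ∀ n, (∑' q : ℤ × ℤ, ‖a n q.1‖ * (‖b q.1 q.2‖ * ‖c q.2 n‖))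
      ≤ (Real.sqrt (∑' m, ‖a n m‖ ^ 2) * Real.sqrt (∑' m, ∑' k, ‖b m k‖ ^ 2))
        * Real.sqrt (∑' k, ‖c k n‖ ^ 2) := by
    intro n
    rw [Summable.tsum_prod' (hsq n) (hfib n)]
    have step2 : ∑' m, ∑' k, ‖a n m‖ * (‖b m k‖ * ‖c k n‖)
        ≤ ∑' m, (‖a n m‖ * Real.sqrt (∑' k, ‖b m k‖ ^ 2)) * Real.sqrt (∑' k, ‖c k n‖ ^ 2) := by
      refine Summable.tsum_le_tsum (hbound n) ?_ ((hmaj n).mul_right _)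
      exact ((summable_prod_of_nonneg (fun q => by positivity)).mp (hsq n)).2
    refine step2.trans ?_
    rw [tsum_mul_right]
    refine mul_le_mul_of_nonneg_right ?_ (Real.sqrt_nonneg _)
    have h3 : ∑' m, ‖a n m‖ * Real.sqrt (∑' k, ‖b m k‖ ^ 2)
        ≤ Real.sqrt (∑' m, ‖a n m‖ ^ 2)
          * Real.sqrt (∑' m, Real.sqrt (∑' k, ‖b m k‖ ^ 2) ^ 2) :=
      tsum_mul_le_sqrt (ha.row n) sqb (fun m => norm_nonneg _) (fun m => Real.sqrt_nonneg _)
    refine h3.trans ?_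
    refine mul_le_mul_of_nonneg_left ?_ (Real.sqrt_nonneg _)
    refine Real.sqrt_le_sqrt (le_of_eq (tsum_congr fun m => ?_))
    exact Real.sq_sqrt (tsum_nonneg fun k => sq_nonneg _)
  have key : Summable fun t : ℤ × ℤ × ℤ => ‖a t.1 t.2.1‖ * (‖b t.2.1 t.2.2‖ * ‖c t.2.2 t.1‖) := by
    refine (summable_prod_of_nonneg (fun t => by positivity)).mpr ⟨fun n => hsq n, ?_⟩
    have houter : Summable fun n => (Real.sqrt (∑' m, ‖a n m‖ ^ 2)
        * Real.sqrt (∑' m, ∑' k, ‖b m k‖ ^ 2)) * Real.sqrt (∑' k, ‖c k n‖ ^ 2) := by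
      have h2 : Summable fun n => Real.sqrt (∑' m, ‖a n m‖ ^ 2)
          * Real.sqrt (∑' k, ‖c k n‖ ^ 2) :=
        summable_mul_of_sq sqa sqc (fun n => Real.sqrt_nonneg _) (fun n => Real.sqrt_nonneg _)
      refine (h2.mul_left (Real.sqrt (∑' m, ∑' k, ‖b m k‖ ^ 2))).congr fun n => by ring
    exact Summable.of_nonneg_of_le (fun n => tsum_nonneg fun q => by positivity)
      (fun n => hout n) houter
  refine key.congr fun t => ?_
  rw [norm_mul, norm_mul]

def tr3 (a b c : ℤ → ℤ → ℂ) : ℂ :=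
  ∑' t : ℤ × ℤ × ℤ, a t.1 t.2.1 * (b t.2.1 t.2.2 * c t.2.2 t.1)

def rotEquiv : (ℤ × ℤ × ℤ) ≃ (ℤ × ℤ × ℤ) where
  toFun t := (t.2.2, t.1, t.2.1)
  invFun t := (t.2.1, t.2.2, t.1)
  left_inv t := rfl
  right_inv t := rfl

lemma tr3_rot (a b c : ℤ → ℤ → ℂ) : tr3 a b c = tr3 c a b := by
  have h := rotEquiv.tsum_eq (fun t : ℤ × ℤ × ℤ => c t.1 t.2.1 * (a t.2.1 t.2.2 * b t.2.2 t.1))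
  rw [tr3, tr3, ← h]
  exact tsum_congr fun t => by
    show a t.1 t.2.1 * (b t.2.1 t.2.2 * c t.2.2 t.1)
      = c t.2.2 t.1 * (a t.1 t.2.1 * b t.2.1 t.2.2)
    ring

def regroupEquiv : (ℤ × ℤ × ℤ) ≃ ((ℤ × ℤ) × ℤ) where
  toFun t := ((t.1, t.2.2), t.2.1)
  invFun s := (s.1.1, s.2, s.1.2)
  left_inv t := rfl
  right_inv s := rfl

lemma tr2_mm_tr3 {a b c : ℤ → ℤ → ℂ} (ha : HSm a) (hb : HSm b) (hc : HSm c) :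
    tr2 (mm a b) c = tr3 a b c := by
  set f : (ℤ × ℤ) × ℤ → ℂ := fun s => a s.1.1 s.2 * (b s.2 s.1.2 * c s.1.2 s.1.1) with hf
  have htrip : Summable fun t : ℤ × ℤ × ℤ => a t.1 t.2.1 * (b t.2.1 t.2.2 * c t.2.2 t.1) :=
    (triple_summable ha hb hc).of_norm
  have hcomp : Summable (f ∘ regroupEquiv) := htrip.congr fun t => rfl
  have hS : Summable f := (regroupEquiv.summable_iff (f := f)).mp hcomp
  have h1 : tr3 a b c = ∑' s : (ℤ × ℤ) × ℤ, f s := by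
    rw [tr3, ← regroupEquiv.tsum_eq f]
    exact tsum_congr fun t => rfl
  rw [h1, Summable.tsum_prod hS, tr2]
  refine tsum_congr fun p => ?_
  show mm a b p.1 p.2 * c p.2 p.1 = ∑' k, a p.1 k * (b k p.2 * c p.2 p.1)
  rw [mm, ← tsum_mul_right]
  exact tsum_congr fun k => by ring

lemma classA {a b c : ℤ → ℤ → ℂ} (ha : HSm a) (hb : HSm b) (hc : HSm c)
    (hda : HSm (dm a)) (hdb : HSm (dm b)) (hdc : HSm (dm c)) :
    tr2 (mm a b) (dm c) + tr2 (mm b c) (dm a) + tr2 (mm c a) (dm b) = 0 := by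
  rw [tr2_mm_tr3 ha hb hdc, tr2_mm_tr3 hb hc hda, tr2_mm_tr3 hc ha hdb]
  rw [tr3_rot b c (dm a), show tr3 c a (dm b) = tr3 a (dm b) c from
    (tr3_rot c a (dm b)).trans (tr3_rot (dm b) c a)]
  have s1 : Summable fun t : ℤ × ℤ × ℤ => a t.1 t.2.1 * (b t.2.1 t.2.2 * dm c t.2.2 t.1) :=
    (triple_summable ha hb hdc).of_norm
  have s2 : Summable fun t : ℤ × ℤ × ℤ => dm a t.1 t.2.1 * (b t.2.1 t.2.2 * c t.2.2 t.1) :=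
    (triple_summable hda hb hc).of_norm
  have s3 : Summable fun t : ℤ × ℤ × ℤ => a t.1 t.2.1 * (dm b t.2.1 t.2.2 * c t.2.2 t.1) :=
    (triple_summable ha hdb hc).of_norm
  rw [tr3, tr3, tr3, ← Summable.tsum_add s1 s2, ← Summable.tsum_add (s1.add s2) s3]
  convert tsum_zero with t
  simp only [dm]
  push_cast
  ring

lemma gpair (A B : H →L[ℂ] H) (hA : HSm (commDEntry A)) (hB : HSm (commDEntry B))
    (u : ℤ → ℂ) (C : ℝ) (hu : ∀ n, ‖u n‖ ≤ C) :
    tr2 (fun n m => od (entry A) n m * (u n - u m)) (commDEntry B)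
      + tr2 (fun n m => od (entry B) n m * (u m - u n)) (commDEntry A) = 0 := by
  have hao := hs_od A hA
  have hbo := hs_od B hB
  have hs1 : Summable fun p : ℤ × ℤ =>
      od (entry A) p.1 p.2 * (u p.1 - u p.2) * commDEntry B p.2 p.1 := by
    refine Summable.of_norm (Summable.of_nonneg_of_le (fun p => norm_nonneg _) (fun p => ?_)
      ((hs_pair_summable hao hB).mul_left (2 * C)))
    rw [norm_mul, norm_mul, norm_mul]
    have h1 : ‖u p.1 - u p.2‖ ≤ 2 * C :=
      (norm_sub_le _ _).trans (by have := hu p.1; have := hu p.2; linarith)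
    calc ‖od (entry A) p.1 p.2‖ * ‖u p.1 - u p.2‖ * ‖commDEntry B p.2 p.1‖
        ≤ ‖od (entry A) p.1 p.2‖ * (2 * C) * ‖commDEntry B p.2 p.1‖ :=
          mul_le_mul_of_nonneg_right (mul_le_mul_of_nonneg_left h1 (norm_nonneg _))
            (norm_nonneg _)
      _ = 2 * C * (‖od (entry A) p.1 p.2‖ * ‖commDEntry B p.2 p.1‖) := by ring
  have hs2 : Summable fun p : ℤ × ℤ =>
      od (entry B) p.2 p.1 * (u p.1 - u p.2) * commDEntry A p.1 p.2 := by
    refine Summable.of_norm (Summable.of_nonneg_of_le (fun p => norm_nonneg _) (fun p => ?_)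
      ((hs_pair_summable hA hbo).mul_left (2 * C)))
    rw [norm_mul, norm_mul, norm_mul]
    have h1 : ‖u p.1 - u p.2‖ ≤ 2 * C :=
      (norm_sub_le _ _).trans (by have := hu p.1; have := hu p.2; linarith)
    calc ‖od (entry B) p.2 p.1‖ * ‖u p.1 - u p.2‖ * ‖commDEntry A p.1 p.2‖
        ≤ ‖od (entry B) p.2 p.1‖ * (2 * C) * ‖commDEntry A p.1 p.2‖ :=
          mul_le_mul_of_nonneg_right (mul_le_mul_of_nonneg_left h1 (norm_nonneg _))
            (norm_nonneg _)
      _ = 2 * C * (‖commDEntry A p.1 p.2‖ * ‖od (entry B) p.2 p.1‖) := by ring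
  set g : ℤ × ℤ → ℂ := fun q => od (entry B) q.1 q.2 * (u q.2 - u q.1) * commDEntry A q.2 q.1
    with hg
  have h2 : tr2 (fun n m => od (entry B) n m * (u m - u n)) (commDEntry A)
      = ∑' p : ℤ × ℤ, od (entry B) p.2 p.1 * (u p.1 - u p.2) * commDEntry A p.1 p.2 := by
    calc tr2 (fun n m => od (entry B) n m * (u m - u n)) (commDEntry A)
        = ∑' q : ℤ × ℤ, g q := rfl
      _ = ∑' p : ℤ × ℤ, g ((Equiv.prodComm ℤ ℤ) p) := (Equiv.tsum_eq (Equiv.prodComm ℤ ℤ) g).symm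
      _ = _ := tsum_congr fun p => rfl
  rw [h2, tr2, ← Summable.tsum_add hs1 hs2]
  convert tsum_zero with p
  by_cases h : p.1 = p.2
  · simp [h]
  · simp only [od, if_neg h, if_neg (Ne.symm h), commDEntry]
    ring

/-! ### Leibniz rule and omega as tr2 -/

lemma entry_le_comm (A : H →L[ℂ] H) {n m : ℤ} (h : n ≠ m) :
    ‖entry A n m‖ ≤ ‖commDEntry A n m‖ := by
  rw [commDEntry, norm_mul]
  nth_rewrite 1 [← one_mul ‖entry A n m‖]
  exact mul_le_mul_of_nonneg_right (gap_norm n m h) (norm_nonneg _)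

lemma summable_sq_od_col (X : H →L[ℂ] H) (m : ℤ) :
    Summable fun n => ‖od (entry X) n m‖ ^ 2 :=
  Summable.of_nonneg_of_le (fun n => by positivity)
    (fun n => pow_le_pow_left₀ (norm_nonneg _) (od_norm_le n m) 2) (summable_sq_col X m)

lemma commD_diag (W : H →L[ℂ] H) {n m : ℤ} (h : n = m) : commDEntry W n m = 0 := by
  rw [commDEntry, h]
  simp

lemma commD_mul (B C : H →L[ℂ] H) (hB : HSm (commDEntry B)) (hC : HSm (commDEntry C))
    (m n : ℤ) :
    commDEntry (B * C) m n
      = mm (commDEntry B) (entry C) m n + mm (entry B) (commDEntry C) m n := by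
  have hsum : HasSum (fun k => entry B m k * entry C k n) (entry (B * C) m n) :=
    hasSum_entry_mul B C m n
  have s1 : Summable fun k => commDEntry B m k * entry C k n :=
    Summable.of_norm ((summable_mul_of_sq (hB.row m) (summable_sq_col C n)
      (fun k => norm_nonneg _) (fun k => norm_nonneg _)).congr fun k => (norm_mul _ _).symm)
  have s2 : Summable fun k => entry B m k * commDEntry C k n :=
    Summable.of_norm ((summable_mul_of_sq (summable_sq_row B m) (hC.col n)
      (fun k => norm_nonneg _) (fun k => norm_nonneg _)).congr fun k => (norm_mul _ _).symm)
  calc commDEntry (B * C) m n = ((m:ℂ) - n) * entry (B * C) m n := rfl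
    _ = ((m:ℂ) - n) * ∑' k, entry B m k * entry C k n := by rw [hsum.tsum_eq]
    _ = ∑' k, ((m:ℂ) - n) * (entry B m k * entry C k n) := tsum_mul_left.symm
    _ = ∑' k, (commDEntry B m k * entry C k n + entry B m k * commDEntry C k n) :=
        tsum_congr fun k => by simp only [commDEntry]; ring
    _ = _ := Summable.tsum_add s1 s2

lemma commD_sub (A B : H →L[ℂ] H) (n m : ℤ) :
    commDEntry (A - B) n m = commDEntry A n m - commDEntry B n m := by
  simp only [commDEntry, entry_sub]
  ring

lemma hs_dW (B C : H →L[ℂ] H) (hB : HSm (commDEntry B)) (hC : HSm (commDEntry C)) :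
    HSm (commDEntry (B * C - C * B)) := by
  have h1 : HSm (mm (commDEntry B) (entry C)) := hs_opr C hB
  have h2 : HSm (mm (entry B) (commDEntry C)) := hs_opl B hC
  have h3 : HSm (mm (commDEntry C) (entry B)) := hs_opr B hC
  have h4 : HSm (mm (entry C) (commDEntry B)) := hs_opl C hB
  refine ((h1.addm h2).subm (h3.addm h4)).of_le' fun n m => le_of_eq ?_
  congr 1
  rw [commD_sub, commD_mul B C hB hC, commD_mul C B hC hB]

lemma omega_tr2 (A W : H →L[ℂ] H) (hA : HSm (commDEntry A)) (hW : HSm (commDEntry W)) :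
    omegaCocycle A W = tr2 (od (entry A)) (commDEntry W) := by
  have hsummable : Summable fun p : ℤ × ℤ => entry A p.1 p.2 * commDEntry W p.2 p.1 := by
    refine Summable.of_norm (Summable.of_nonneg_of_le (fun p => norm_nonneg _) (fun p => ?_)
      (hs_pair_summable hA hW))
    rw [norm_mul, norm_mul]
    by_cases h : p.1 = p.2
    · rw [commD_diag W h.symm]
      simp
    · exact mul_le_mul_of_nonneg_right (entry_le_comm A h) (norm_nonneg _)
  have h0 : omegaCocycle A W = ∑' p : ℤ × ℤ, entry A p.1 p.2 * commDEntry W p.2 p.1 :=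
    (Summable.tsum_prod hsummable).symm
  rw [h0, tr2]
  refine tsum_congr fun p => ?_
  by_cases h : p.1 = p.2
  · rw [commD_diag W h.symm, mul_zero, mul_zero]
  · rw [od, if_neg h]

lemma tr2_split4 {a x y z v w : ℤ → ℤ → ℂ} (hw : ∀ n m, w n m = x n m + y n m - (z n m + v n m))
    (h1 : Summable fun p : ℤ × ℤ => a p.1 p.2 * x p.2 p.1)
    (h2 : Summable fun p : ℤ × ℤ => a p.1 p.2 * y p.2 p.1)
    (h3 : Summable fun p : ℤ × ℤ => a p.1 p.2 * z p.2 p.1)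
    (h4 : Summable fun p : ℤ × ℤ => a p.1 p.2 * v p.2 p.1) :
    tr2 a w = tr2 a x + tr2 a y - (tr2 a z + tr2 a v) := by
  rw [tr2, tr2, tr2, tr2, tr2, ← Summable.tsum_add h1 h2, ← Summable.tsum_add h3 h4,
    ← Summable.tsum_sub (h1.add h2) (h3.add h4)]
  exact tsum_congr fun p => by rw [hw]; ring

lemma mm_split_left (C : H →L[ℂ] H) {a : ℤ → ℤ → ℂ} (ha : HSm a) (hC : HSm (commDEntry C))
    (n m : ℤ) :
    mm (entry C) a n m = mm (od (entry C)) a n m + entry C n n * a n m := by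
  have s1 : Summable fun k => od (entry C) n k * a k m :=
    Summable.of_norm ((summable_mul_of_sq (summable_sq_od_row C n) (ha.col m)
      (fun k => norm_nonneg _) (fun k => norm_nonneg _)).congr fun k => (norm_mul _ _).symm)
  have s2 : Summable fun k => (if k = n then entry C n n * a n m else 0) :=
    (hasSum_ite_eq n _).summable
  calc mm (entry C) a n m
      = ∑' k, (od (entry C) n k * a k m + (if k = n then entry C n n * a n m else 0)) := by
        rw [mm]
        refine tsum_congr fun k => ?_
        by_cases h : k = n
        · rw [od, if_pos h.symm, if_pos h, h]
          ring
        · rw [od, if_neg (Ne.symm h), if_neg h]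
          ring
    _ = (∑' k, od (entry C) n k * a k m) + ∑' k, (if k = n then entry C n n * a n m else 0) :=
        Summable.tsum_add s1 s2
    _ = mm (od (entry C)) a n m + entry C n n * a n m := by rw [tsum_ite_eq, mm]

lemma mm_split_right (C : H →L[ℂ] H) {a : ℤ → ℤ → ℂ} (ha : HSm a) (hC : HSm (commDEntry C))
    (n m : ℤ) :
    mm a (entry C) n m = mm a (od (entry C)) n m + a n m * entry C m m := by
  have s1 : Summable fun k => a n k * od (entry C) k m :=
    Summable.of_norm ((summable_mul_of_sq (ha.row n) (summable_sq_od_col C m)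
      (fun k => norm_nonneg _) (fun k => norm_nonneg _)).congr fun k => (norm_mul _ _).symm)
  have s2 : Summable fun k => (if k = m then a n m * entry C m m else 0) :=
    (hasSum_ite_eq m _).summable
  calc mm a (entry C) n m
      = ∑' k, (a n k * od (entry C) k m + (if k = m then a n m * entry C m m else 0)) := by
        rw [mm]
        refine tsum_congr fun k => ?_
        by_cases h : k = m
        · rw [od, if_pos h, if_pos h, h]
          ring
        · rw [od, if_neg h, if_neg h]
          ring
    _ = (∑' k, a n k * od (entry C) k m) + ∑' k, (if k = m then a n m * entry C m m else 0) :=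
        Summable.tsum_add s1 s2
    _ = mm a (od (entry C)) n m + a n m * entry C m m := by rw [tsum_ite_eq, mm]

lemma omega_summable (A W : H →L[ℂ] H) (hA : HSm (commDEntry A)) (hW : HSm (commDEntry W)) :
    Summable fun p : ℤ × ℤ => entry A p.1 p.2 * commDEntry W p.2 p.1 := by
  refine Summable.of_norm (Summable.of_nonneg_of_le (fun p => norm_nonneg _) (fun p => ?_)
    (hs_pair_summable hA hW))
  rw [norm_mul, norm_mul]
  by_cases h : p.1 = p.2
  · rw [commD_diag W h.symm]
    simp
  · exact mul_le_mul_of_nonneg_right (entry_le_comm A h) (norm_nonneg _)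

lemma omega_expand (A B C : H →L[ℂ] H)
    (hA : HSm (commDEntry A)) (hB : HSm (commDEntry B)) (hC : HSm (commDEntry C)) :
    omegaCocycle A (B * C - C * B)
      = tr2 (mm (od (entry C)) (od (entry A))) (commDEntry B)
        - tr2 (mm (od (entry A)) (od (entry C))) (commDEntry B)
        + tr2 (mm (od (entry A)) (od (entry B))) (commDEntry C)
        - tr2 (mm (od (entry B)) (od (entry A))) (commDEntry C)
        + tr2 (fun n m => od (entry A) n m * (entry C n n - entry C m m)) (commDEntry B)
        + tr2 (fun n m => od (entry A) n m * (entry B m m - entry B n n)) (commDEntry C) := by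
  have hao : HSm (od (entry A)) := hs_od A hA
  have hbo : HSm (od (entry B)) := hs_od B hB
  have hco : HSm (od (entry C)) := hs_od C hC
  have hW := hs_dW B C hB hC
  rw [omega_tr2 A (B * C - C * B) hA hW]
  have hdWeq : ∀ n m, commDEntry (B * C - C * B) n m
      = mm (commDEntry B) (entry C) n m + mm (entry B) (commDEntry C) n m
        - (mm (commDEntry C) (entry B) n m + mm (entry C) (commDEntry B) n m) := by
    intro n m
    rw [commD_sub, commD_mul B C hB hC, commD_mul C B hC hB]
  have q1 := hs_pair_summable' hao (hs_opr C hB)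
  have q2 := hs_pair_summable' hao (hs_opl B hC)
  have q3 := hs_pair_summable' hao (hs_opr B hC)
  have q4 := hs_pair_summable' hao (hs_opl C hB)
  rw [tr2_split4 hdWeq q1 q2 q3 q4]
  rw [tr2_move' C hao hB, tr2_move B hao hC, tr2_move' B hao hC, tr2_move C hao hB]
  -- gap matrices are HS
  have gapC1 : HSm (fun n m => entry C n n * od (entry A) n m) :=
    hao.of_bound ‖C‖ (fun n m => by
      rw [norm_mul]
      exact mul_le_mul_of_nonneg_right (entry_bound C n n) (norm_nonneg _))
  have gapC2 : HSm (fun n m => od (entry A) n m * entry C m m) :=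
    hao.of_bound ‖C‖ (fun n m => by
      rw [norm_mul, mul_comm ‖od (entry A) n m‖ _]
      exact mul_le_mul_of_nonneg_right (entry_bound C m m) (norm_nonneg _))
  have gapB1 : HSm (fun n m => entry B n n * od (entry A) n m) :=
    hao.of_bound ‖B‖ (fun n m => by
      rw [norm_mul]
      exact mul_le_mul_of_nonneg_right (entry_bound B n n) (norm_nonneg _))
  have gapB2 : HSm (fun n m => od (entry A) n m * entry B m m) :=
    hao.of_bound ‖B‖ (fun n m => by
      rw [norm_mul, mul_comm ‖od (entry A) n m‖ _]
      exact mul_le_mul_of_nonneg_right (entry_bound B m m) (norm_nonneg _))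
  -- split tr2 terms at the diagonal
  have splitL_CB : tr2 (mm (entry C) (od (entry A))) (commDEntry B)
      = tr2 (mm (od (entry C)) (od (entry A))) (commDEntry B)
        + tr2 (fun n m => entry C n n * od (entry A) n m) (commDEntry B) := by
    have e1 := hs_pair_summable' (hco.mul_hs hao) hB
    have e2 := hs_pair_summable' gapC1 hB
    rw [tr2, tr2, tr2, ← Summable.tsum_add e1 e2]
    refine tsum_congr fun p => ?_
    rw [mm_split_left C hao hC p.1 p.2]
    ring
  have splitR_AB : tr2 (mm (od (entry A)) (entry B)) (commDEntry C)
      = tr2 (mm (od (entry A)) (od (entry B))) (commDEntry C)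
        + tr2 (fun n m => od (entry A) n m * entry B m m) (commDEntry C) := by
    have e1 := hs_pair_summable' (hao.mul_hs hbo) hC
    have e2 := hs_pair_summable' gapB2 hC
    rw [tr2, tr2, tr2, ← Summable.tsum_add e1 e2]
    refine tsum_congr fun p => ?_
    rw [mm_split_right B hao hB p.1 p.2]
    ring
  have splitL_BC : tr2 (mm (entry B) (od (entry A))) (commDEntry C)
      = tr2 (mm (od (entry B)) (od (entry A))) (commDEntry C)
        + tr2 (fun n m => entry B n n * od (entry A) n m) (commDEntry C) := by
    have e1 := hs_pair_summable' (hbo.mul_hs hao) hC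
    have e2 := hs_pair_summable' gapB1 hC
    rw [tr2, tr2, tr2, ← Summable.tsum_add e1 e2]
    refine tsum_congr fun p => ?_
    rw [mm_split_left B hao hB p.1 p.2]
    ring
  have splitR_AC : tr2 (mm (od (entry A)) (entry C)) (commDEntry B)
      = tr2 (mm (od (entry A)) (od (entry C))) (commDEntry B)
        + tr2 (fun n m => od (entry A) n m * entry C m m) (commDEntry B) := by
    have e1 := hs_pair_summable' (hao.mul_hs hco) hB
    have e2 := hs_pair_summable' gapC2 hB
    rw [tr2, tr2, tr2, ← Summable.tsum_add e1 e2]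
    refine tsum_congr fun p => ?_
    rw [mm_split_right C hao hC p.1 p.2]
    ring
  -- merge the diagonal gap terms
  have merge1 : tr2 (fun n m => entry C n n * od (entry A) n m) (commDEntry B)
      - tr2 (fun n m => od (entry A) n m * entry C m m) (commDEntry B)
      = tr2 (fun n m => od (entry A) n m * (entry C n n - entry C m m)) (commDEntry B) := by
    have e1 := hs_pair_summable' gapC1 hB
    have e2 := hs_pair_summable' gapC2 hB
    rw [tr2, tr2, tr2, ← Summable.tsum_sub e1 e2]
    exact tsum_congr fun p => by ring
  have merge2 : tr2 (fun n m => od (entry A) n m * entry B m m) (commDEntry C)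
      - tr2 (fun n m => entry B n n * od (entry A) n m) (commDEntry C)
      = tr2 (fun n m => od (entry A) n m * (entry B m m - entry B n n)) (commDEntry C) := by
    have e1 := hs_pair_summable' gapB2 hC
    have e2 := hs_pair_summable' gapB1 hC
    rw [tr2, tr2, tr2, ← Summable.tsum_sub e1 e2]
    exact tsum_congr fun p => by ring
  rw [splitL_CB, splitR_AB, splitL_BC, splitR_AC]
  linear_combination merge1 + merge2


/-- The bilinear form `ω(X,Y) = tr (X [D,Y])` on `𝔤` is a Lie algebra 2-cocycle:
skew-symmetric and satisfying the cocycle identity. -/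
theorem omega_is_two_cocycle :
    (∀ X Y : H →L[ℂ] H, InG X → InG Y → omegaCocycle X Y = - omegaCocycle Y X) ∧
    (∀ X Y Z : H →L[ℂ] H, InG X → InG Y → InG Z →
      omegaCocycle X (Y * Z - Z * Y) + omegaCocycle Y (Z * X - X * Z) +
        omegaCocycle Z (X * Y - Y * X) = 0) := by
  constructor
  · intro X Y hX hY
    have hdx : HSm (commDEntry X) := hX.2
    have hdy : HSm (commDEntry Y) := hY.2
    have sxy := omega_summable X Y hdx hdy
    have syx := omega_summable Y X hdy hdx
    have h1 : omegaCocycle X Y = ∑' p : ℤ × ℤ, entry X p.1 p.2 * commDEntry Y p.2 p.1 :=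
      (Summable.tsum_prod sxy).symm
    have h2 : omegaCocycle Y X = ∑' p : ℤ × ℤ, entry Y p.1 p.2 * commDEntry X p.2 p.1 :=
      (Summable.tsum_prod syx).symm
    set k : ℤ × ℤ → ℂ := fun q => -(entry Y q.1 q.2 * commDEntry X q.2 q.1) with hk
    have h3 : omegaCocycle X Y = ∑' p : ℤ × ℤ, k ((Equiv.prodComm ℤ ℤ) p) := by
      rw [h1]
      refine tsum_congr fun p => ?_
      show entry X p.1 p.2 * commDEntry Y p.2 p.1
        = -(entry Y p.2 p.1 * commDEntry X p.1 p.2)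
      simp only [commDEntry]
      ring
    rw [h3, Equiv.tsum_eq (Equiv.prodComm ℤ ℤ) k, h2, ← tsum_neg]
  · intro X Y Z hX hY hZ
    have hdx : HSm (commDEntry X) := hX.2
    have hdy : HSm (commDEntry Y) := hY.2
    have hdz : HSm (commDEntry Z) := hZ.2
    have hxo : HSm (od (entry X)) := hs_od X hdx
    have hyo : HSm (od (entry Y)) := hs_od Y hdy
    have hzo : HSm (od (entry Z)) := hs_od Z hdz
    have hdmx : HSm (dm (od (entry X))) := by rw [dm_od_eq X]; exact hdx
    have hdmy : HSm (dm (od (entry Y))) := by rw [dm_od_eq Y]; exact hdy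
    have hdmz : HSm (dm (od (entry Z))) := by rw [dm_od_eq Z]; exact hdz
    have hA1 := classA hxo hyo hzo hdmx hdmy hdmz
    have hA2 := classA hyo hxo hzo hdmy hdmx hdmz
    rw [dm_od_eq X, dm_od_eq Y, dm_od_eq Z] at hA1 hA2
    have hg1 := gpair Y Z hdy hdz (fun n => entry X n n) ‖X‖ (fun n => entry_bound X n n)
    have hg2 := gpair Z X hdz hdx (fun n => entry Y n n) ‖Y‖ (fun n => entry_bound Y n n)
    have hg3 := gpair X Y hdx hdy (fun n => entry Z n n) ‖Z‖ (fun n => entry_bound Z n n)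
    rw [omega_expand X Y Z hdx hdy hdz, omega_expand Y Z X hdy hdz hdx,
      omega_expand Z X Y hdz hdx hdy]
    linear_combination (2:ℂ) * hA1 - (2:ℂ) * hA2 + hg1 + hg2 + hg3
end
end

section
/- For X,Y in the Lie algebra 𝔤 of bounded skew-adjoint operators with [D,X] Hilbert–Schmidt, the conditional trace tr(X[D,Y]) = Σ_n ⟨e_n, X[D,Y]e_n⟩ converges absolutely. -/
noncomputable section

open scoped ENNReal

/-- Pointwise bound: `|X_{nm} (m-n) Y_{mn}| ≤ |(n-m) X_{nm}| ⬝ |(m-n) Y_{mn}|`. -/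
lemma key_bound (X Y : H →L[ℂ] H) (n m : ℤ) :
    ‖entry X n m * commDEntry Y m n‖ ≤ ‖commDEntry X n m‖ * ‖commDEntry Y m n‖ := by
  rcases eq_or_ne m n with rfl | h
  · simp [commDEntry]
  · have h1 : (1 : ℝ) ≤ ‖((n : ℂ) - (m : ℂ))‖ := by
      have : ((n : ℂ) - (m : ℂ)) = ((n - m : ℤ) : ℂ) := by push_cast; ring
      rw [this, Complex.norm_intCast]
      exact_mod_cast Int.one_le_abs (sub_ne_zero.2 (Ne.symm h))
    simp only [commDEntry, norm_mul]
    exact mul_le_mul_of_nonneg_right (le_mul_of_one_le_left (norm_nonneg _) h1)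
      (by positivity)

set_option maxHeartbeats 1000000 in
/-- For `X, Y ∈ 𝔤`, the conditional trace `tr (X[D,Y]) = Σ_n ⟨e_n, X[D,Y] e_n⟩`
converges absolutely: the sequence of diagonal matrix elements of `X[D,Y]`
(in the fixed basis) is absolutely summable. -/
theorem conditional_trace_absolutely_convergent (X Y : H →L[ℂ] H)
    (hX : InG X) (hY : InG Y) :
    Summable (fun n : ℤ => ‖∑' m : ℤ, entry X n m * commDEntry Y m n‖) ∧
    ∀ n : ℤ, Summable (fun m : ℤ => ‖entry X n m * commDEntry Y m n‖) := by
  obtain ⟨-, hX2⟩ := hX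
  obtain ⟨-, hY2⟩ := hY
  have hYswap : Summable (fun p : ℤ × ℤ => ‖commDEntry Y p.2 p.1‖ ^ 2) :=
    ((Equiv.prodComm ℤ ℤ).summable_iff).2 hY2
  have hg : Summable (fun p : ℤ × ℤ => ‖commDEntry X p.1 p.2‖ * ‖commDEntry Y p.2 p.1‖) := by
    refine Summable.of_nonneg_of_le (fun p => by positivity) (fun p => ?_)
      ((hX2.add hYswap).div_const 2)
    nlinarith [sq_nonneg (‖commDEntry X p.1 p.2‖ - ‖commDEntry Y p.2 p.1‖)]
  have hf : Summable (fun p : ℤ × ℤ => ‖entry X p.1 p.2 * commDEntry Y p.2 p.1‖) :=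
    hg.of_nonneg_of_le (fun p => norm_nonneg _) (fun p => key_bound X Y p.1 p.2)
  have h2 : ∀ n : ℤ, Summable (fun m : ℤ => ‖entry X n m * commDEntry Y m n‖) :=
    fun n => hf.prod_factor n
  refine ⟨?_, h2⟩
  have h3 : Summable (fun n : ℤ => ∑' m : ℤ, ‖entry X n m * commDEntry Y m n‖) :=
    ((summable_prod_of_nonneg (fun p => norm_nonneg _)).1 hf).2
  exact h3.of_nonneg_of_le (fun n => norm_nonneg _)
    (fun n => norm_tsum_le_tsum_norm (h2 n))
end
end

section
/- The additive group of bounded integer sequences (a_k)_{k∈ℤ} ∈ ℓ∞(ℤ,ℤ) modulo the subgroup of sequences with finitely many nonzero entries is a free abelian group of cardinality 2^{ℵ₀}. -/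
/-- The additive group of bounded integer sequences `(a_k)_{k ∈ ℤ}`. -/
def boundedIntSeq : AddSubgroup (ℤ → ℤ) where
  carrier := {f | ∃ C : ℤ, ∀ k, |f k| ≤ C}
  zero_mem' := ⟨0, fun k => by simp⟩
  add_mem' := by
    rintro f g ⟨C, hC⟩ ⟨C', hC'⟩
    exact ⟨C + C', fun k => (abs_add_le _ _).trans (add_le_add (hC k) (hC' k))⟩
  neg_mem' := by
    rintro f ⟨C, hC⟩
    exact ⟨C, fun k => by simpa using hC k⟩

/-- The subgroup of bounded integer sequences with only finitely many nonzero
entries. -/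
def finitelySupported : AddSubgroup boundedIntSeq where
  carrier := {f | (Function.support (f : ℤ → ℤ)).Finite}
  zero_mem' := by simp
  add_mem' := by
    intro f g hf hg
    exact ((hf.union hg).subset (Function.support_add _ _))
  neg_mem' := by
    intro f hf
    simpa [Function.support_neg] using hf



open Filter Set

namespace SpeckerAux

/-! ### Limit values along ultrafilters -/

open Classical in
/-- The limit value of `f` along the ultrafilter `u` (defined when some fiber of `f`
belongs to `u`, otherwise `0`). -/
noncomputable def limVal (f : ℤ → ℤ) (u : Ultrafilter ℤ) : ℤ :=
  if h : ∃ v, f ⁻¹' {v} ∈ u then h.choose else 0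

lemma fiber_unique {f : ℤ → ℤ} {u : Ultrafilter ℤ} {v w : ℤ}
    (hv : f ⁻¹' {v} ∈ u) (hw : f ⁻¹' {w} ∈ u) : v = w := by
  obtain ⟨k, hk⟩ := Ultrafilter.nonempty_of_mem (inter_mem hv hw)
  simp only [mem_inter_iff, mem_preimage, mem_singleton_iff] at hk
  exact hk.1.symm.trans hk.2

lemma limVal_mem {f : ℤ → ℤ} {u : Ultrafilter ℤ} (h : ∃ v, f ⁻¹' {v} ∈ u) :
    f ⁻¹' {limVal f u} ∈ u := by
  rw [limVal, dif_pos h]; exact h.choose_spec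

lemma limVal_eq {f : ℤ → ℤ} {u : Ultrafilter ℤ} {v : ℤ} (hv : f ⁻¹' {v} ∈ u) :
    limVal f u = v :=
  fiber_unique (limVal_mem ⟨v, hv⟩) hv

/-! ### Bounded sequences have fibers in every ultrafilter -/

lemma range_finite (f : boundedIntSeq) : (Set.range (f : ℤ → ℤ)).Finite := by
  obtain ⟨C, hC⟩ := f.2
  refine (Set.finite_Icc (-C) C).subset ?_
  rintro _ ⟨k, rfl⟩
  exact abs_le.mp (hC k)

lemma exists_fiber (f : boundedIntSeq) (u : Ultrafilter ℤ) :
    ∃ v, ((f : ℤ → ℤ)) ⁻¹' {v} ∈ u := by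
  have hmem : Set.range (f : ℤ → ℤ) ∈ Ultrafilter.map (f : ℤ → ℤ) u := by
    rw [Ultrafilter.mem_map]
    have : ((f : ℤ → ℤ)) ⁻¹' Set.range (f : ℤ → ℤ) = Set.univ := by
      ext k; simp
    rw [this]; exact univ_mem
  obtain ⟨v, -, hv⟩ := Ultrafilter.eq_pure_of_finite_mem (range_finite f) hmem
  refine ⟨v, ?_⟩
  have : {v} ∈ Ultrafilter.map (f : ℤ → ℤ) u := by rw [hv]; exact rfl
  rwa [Ultrafilter.mem_map] at this

/-! ### The space of free ultrafilters -/

/-- The set of free (non-principal) ultrafilters on `ℤ`. -/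
def FreeUF : Set (Ultrafilter ℤ) := {u | ∀ s : Set ℤ, s.Finite → s ∉ u}

lemma isClosed_freeUF : IsClosed FreeUF := by
  have : FreeUF = ⋂ (s : Set ℤ) (_ : s.Finite), {u : Ultrafilter ℤ | s ∈ u}ᶜ := by
    ext u; simp [FreeUF]
  rw [this]
  exact isClosed_iInter fun s => isClosed_iInter fun _ =>
    (ultrafilter_isOpen_basic s).isClosed_compl

instance : CompactSpace FreeUF :=
  isCompact_iff_compactSpace.mp isClosed_freeUF.isCompact

/-! ### The homomorphism to locally constant functions -/

lemma fiber_setOf (f : boundedIntSeq) (v : ℤ) :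
    {x : FreeUF | limVal (f : ℤ → ℤ) (x : Ultrafilter ℤ) = v}
      = Subtype.val ⁻¹' {u : Ultrafilter ℤ | ((f : ℤ → ℤ)) ⁻¹' {v} ∈ u} := by
  ext x
  constructor
  · rintro rfl
    exact limVal_mem (exists_fiber f x)
  · intro hx
    exact limVal_eq hx

lemma isLocallyConstant (f : boundedIntSeq) :
    IsLocallyConstant (fun x : FreeUF => limVal (f : ℤ → ℤ) (x : Ultrafilter ℤ)) := by
  intro s
  have : (fun x : FreeUF => limVal (f : ℤ → ℤ) (x : Ultrafilter ℤ)) ⁻¹' s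
      = ⋃ v ∈ s, {x : FreeUF | limVal (f : ℤ → ℤ) (x : Ultrafilter ℤ) = v} := by
    ext x; simp
  rw [this]
  refine isOpen_biUnion fun v _ => ?_
  rw [fiber_setOf]
  exact (ultrafilter_isOpen_basic _).preimage continuous_subtype_val

/-- The canonical map from bounded sequences to locally constant functions on the
space of free ultrafilters. -/
noncomputable def Phi : boundedIntSeq →+ LocallyConstant FreeUF ℤ where
  toFun f := ⟨fun x => limVal (f : ℤ → ℤ) (x : Ultrafilter ℤ), isLocallyConstant f⟩
  map_zero' := by
    ext x
    refine limVal_eq (v := 0) ?_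
    have : ((0 : boundedIntSeq) : ℤ → ℤ) ⁻¹' {0} = Set.univ := by
      ext k; simp
    rw [this]; exact univ_mem
  map_add' f g := by
    ext x
    have hf := limVal_mem (exists_fiber f (x : Ultrafilter ℤ))
    have hg := limVal_mem (exists_fiber g (x : Ultrafilter ℤ))
    have : ((f + g : boundedIntSeq) : ℤ → ℤ) ⁻¹' {limVal (f : ℤ → ℤ) x + limVal (g : ℤ → ℤ) x}
        ∈ (x : Ultrafilter ℤ) := by
      refine mem_of_superset (inter_mem hf hg) ?_
      rintro k ⟨hk1, hk2⟩
      simp only [mem_preimage, mem_singleton_iff] at hk1 hk2 ⊢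
      simp [hk1, hk2]
    exact limVal_eq this

lemma Phi_apply (f : boundedIntSeq) (x : FreeUF) :
    Phi f x = limVal (f : ℤ → ℤ) (x : Ultrafilter ℤ) := rfl

/-! ### Kernel of Phi -/

lemma Phi_ker : Phi.ker = finitelySupported := by
  ext f
  simp only [AddMonoidHom.mem_ker]
  constructor
  · intro h
    by_contra hfin
    have hinf : (Function.support (f : ℤ → ℤ)).Infinite := hfin
    have hne : (cofinite ⊓ 𝓟 (Function.support (f : ℤ → ℤ))).NeBot :=
      hinf.cofinite_inf_principal_neBot
    obtain ⟨u, hu⟩ := Ultrafilter.exists_le (cofinite ⊓ 𝓟 (Function.support (f : ℤ → ℤ)))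
    have hcof : (u : Filter ℤ) ≤ cofinite := hu.trans inf_le_left
    have hsupp : Function.support (f : ℤ → ℤ) ∈ u := hu (by
      exact mem_inf_of_right (mem_principal_self _))
    have hufree : u ∈ FreeUF := by
      intro s hs hsu
      have : sᶜ ∈ u := hcof hs.compl_mem_cofinite
      have hmem := inter_mem hsu this
      rw [Set.inter_compl_self] at hmem
      exact Ultrafilter.empty_notMem hmem
    have h0 : limVal (f : ℤ → ℤ) u = 0 := by
      have := congrArg (fun g : LocallyConstant FreeUF ℤ => g ⟨u, hufree⟩) h
      simpa [Phi_apply] using this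
    have hv := limVal_mem (exists_fiber f u)
    rw [h0] at hv
    have : ((f : ℤ → ℤ) ⁻¹' {0}) ∩ Function.support (f : ℤ → ℤ) ∈ u := inter_mem hv hsupp
    obtain ⟨k, hk1, hk2⟩ := Ultrafilter.nonempty_of_mem this
    exact hk2 hk1
  · intro h
    ext x
    have hx : (Function.support (f : ℤ → ℤ))ᶜ ∈ (x : Ultrafilter ℤ) :=
      Ultrafilter.compl_mem_iff_notMem.mpr (x.2 _ h)
    have : ((f : ℤ → ℤ)) ⁻¹' {0} ∈ (x : Ultrafilter ℤ) := by
      refine mem_of_superset hx ?_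
      intro k hk
      simp only [mem_compl_iff, Function.mem_support, not_not] at hk
      simpa using hk
    simpa [Phi_apply] using limVal_eq this

/-! ### Surjectivity of Phi -/

lemma exists_basic_between {K U : Set (Ultrafilter ℤ)} (hK : IsCompact K) (hU : IsOpen U)
    (hKU : K ⊆ U) : ∃ A : Set ℤ, K ⊆ {u | A ∈ u} ∧ {u | A ∈ u} ⊆ U := by
  have hchoice : ∀ u : K, ∃ A : Set ℤ, (u : Ultrafilter ℤ) ∈ {v : Ultrafilter ℤ | A ∈ v}
      ∧ {v : Ultrafilter ℤ | A ∈ v} ⊆ U := by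
    rintro ⟨u, hu⟩
    obtain ⟨t, ht, hut, htU⟩ :=
      ultrafilterBasis_is_basis.exists_subset_of_mem_open (hKU hu) hU
    obtain ⟨A, rfl⟩ := ht
    exact ⟨A, hut, htU⟩
  choose A hA1 hA2 using hchoice
  obtain ⟨t, ht⟩ := hK.elim_finite_subcover (fun u : K => {v : Ultrafilter ℤ | A u ∈ v})
    (fun u => ultrafilter_isOpen_basic _) (fun u hu => mem_iUnion.mpr ⟨(⟨u, hu⟩ : K), hA1 ⟨u, hu⟩⟩)
  refine ⟨⋃ u ∈ t, A u, ?_, ?_⟩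
  · intro v hv
    have hcover := ht hv
    simp only [Set.mem_iUnion, Set.mem_setOf_eq, exists_prop] at hcover
    obtain ⟨u, hut, hAu⟩ := hcover
    exact (Ultrafilter.finite_biUnion_mem_iff t.finite_toSet).mpr ⟨u, hut, hAu⟩
  · intro v hv
    obtain ⟨u, -, hAu⟩ := (Ultrafilter.finite_biUnion_mem_iff t.finite_toSet).mp hv
    exact hA2 u hAu

lemma clopen_trace {F : Set FreeUF} (hF : IsClopen F) :
    ∃ A : Set ℤ, F = {x : FreeUF | A ∈ (x : Ultrafilter ℤ)} := by
  obtain ⟨U, hUopen, hUF⟩ := isOpen_induced_iff.mp hF.2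
  have hKcomp : IsCompact (Subtype.val '' F) :=
    (hF.1.isCompact).image continuous_subtype_val
  have hsub : Subtype.val '' F ⊆ U := by
    rintro _ ⟨x, hx, rfl⟩
    rw [← hUF] at hx
    exact hx
  obtain ⟨A, h1, h2⟩ := exists_basic_between hKcomp hUopen hsub
  refine ⟨A, ?_⟩
  ext x
  constructor
  · intro hx
    exact h1 ⟨x, hx, rfl⟩
  · intro hx
    have : (x : Ultrafilter ℤ) ∈ U := h2 hx
    rw [← hUF]
    exact this

lemma Phi_surjective : Function.Surjective Phi := by
  intro g
  classical
  -- finite range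
  have hrange : (Set.range g).Finite := g.range_finite
  set V : Finset ℤ := hrange.toFinset with hV
  -- fibers are clopen, hence traces of basic sets
  have hclopen : ∀ v : ℤ, IsClopen (g ⁻¹' {v}) := fun v => by
    refine ⟨?_, g.isLocallyConstant _⟩
    have : (g ⁻¹' {v})ᶜ = g ⁻¹' ({v}ᶜ) := by ext x; simp
    rw [← isOpen_compl_iff, this]
    exact g.isLocallyConstant _
  have hA : ∀ v : ℤ, ∃ A : Set ℤ, g ⁻¹' {v} = {x : FreeUF | A ∈ (x : Ultrafilter ℤ)} :=
    fun v => clopen_trace (hclopen v)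
  choose A hAspec using hA
  -- the candidate sequence
  set S : ℤ → Finset ℤ := fun k => V.filter (fun v => k ∈ A v) with hS
  set f : ℤ → ℤ := fun k => if h : (S k).Nonempty then (S k).min' h else 0 with hf
  have hfmem : ∀ k, f k = 0 ∨ f k ∈ V := by
    intro k
    by_cases h : (S k).Nonempty
    · right
      have := (S k).min'_mem h
      rw [hf]
      simp only [dif_pos h]
      exact Finset.mem_of_mem_filter _ this
    · left; rw [hf]; simp [h]
  have hbdd : ∃ C : ℤ, ∀ k, |f k| ≤ C := by
    refine ⟨(V.sup Int.natAbs : ℕ), fun k => ?_⟩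
    rcases hfmem k with h | h
    · rw [h]; simp
    · rw [Int.abs_eq_natAbs]
      exact_mod_cast Finset.le_sup (f := Int.natAbs) h
  refine ⟨⟨f, hbdd⟩, ?_⟩
  ext x
  set v : ℤ := g x with hv
  have hvV : v ∈ V := by
    rw [hV]
    simp only [Set.Finite.mem_toFinset]
    exact ⟨x, rfl⟩
  have hxfib : x ∈ g ⁻¹' {v} := by simp [hv]
  have hAv : A v ∈ (x : Ultrafilter ℤ) := by
    rw [hAspec v] at hxfib
    exact hxfib
  have hT : (A v ∩ ⋂ w ∈ V.erase v, (A w)ᶜ) ∈ (x : Ultrafilter ℤ) := by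
    refine inter_mem hAv ?_
    rw [Filter.biInter_finset_mem]
    intro w hw
    have hwv : w ≠ v := Finset.ne_of_mem_erase hw
    refine Ultrafilter.compl_mem_iff_notMem.mpr ?_
    intro hAw
    have : x ∈ g ⁻¹' {w} := by
      rw [hAspec w]
      exact hAw
    simp only [mem_preimage, mem_singleton_iff] at this
    exact hwv (by rw [← this, hv])
  have hsubset : (A v ∩ ⋂ w ∈ V.erase v, (A w)ᶜ) ⊆ f ⁻¹' {v} := by
    rintro k ⟨hk1, hk2⟩
    simp only [Set.mem_iInter] at hk2
    have hSk : S k = {v} := by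
      apply Finset.eq_singleton_iff_unique_mem.mpr
      constructor
      · rw [hS]; simp only [Finset.mem_filter]; exact ⟨hvV, hk1⟩
      · intro w hw
        rw [hS] at hw
        simp only [Finset.mem_filter] at hw
        by_contra hne
        exact hk2 w (Finset.mem_erase.mpr ⟨hne, hw.1⟩) hw.2
    simp only [mem_preimage, mem_singleton_iff, hf, hSk]
    simp
  have : f ⁻¹' {v} ∈ (x : Ultrafilter ℤ) := mem_of_superset hT hsubset
  rw [Phi_apply]
  exact limVal_eq this


/-! ### The quotient is isomorphic to `LocallyConstant FreeUF ℤ` -/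

/-- The quotient of bounded sequences by finitely supported ones, identified with
locally constant functions on the space of free ultrafilters. -/
noncomputable def quotEquiv :
    (boundedIntSeq ⧸ finitelySupported) ≃+ LocallyConstant FreeUF ℤ :=
  (QuotientAddGroup.quotientAddEquivOfEq Phi_ker.symm).trans
    (QuotientAddGroup.quotientKerEquivOfSurjective Phi Phi_surjective)

instance : Module.Free ℤ (LocallyConstant FreeUF ℤ) :=
  LocallyConstant.freeOfProfinite (Profinite.of FreeUF)

/-! ### Cardinality: upper bound -/

lemma card_le : Cardinal.mk (boundedIntSeq ⧸ finitelySupported) ≤ Cardinal.continuum := by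
  have h1 : Cardinal.mk (boundedIntSeq ⧸ finitelySupported) ≤ Cardinal.mk boundedIntSeq :=
    Cardinal.mk_le_of_surjective (QuotientAddGroup.mk'_surjective finitelySupported)
  have h2 : Cardinal.mk boundedIntSeq ≤ Cardinal.mk (ℤ → ℤ) := Cardinal.mk_subtype_le _
  have h3 : Cardinal.mk (ℤ → ℤ) = Cardinal.continuum := by
    rw [Cardinal.mk_arrow, Cardinal.mk_int, Cardinal.lift_aleph0,
      Cardinal.power_self_eq le_rfl, Cardinal.two_power_aleph0]
  exact (h1.trans h2).trans h3.le

/-! ### Cardinality: lower bound via an almost disjoint family -/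

/-- Prefix of length `n` of a boolean sequence. -/
def pre (r : ℕ → Bool) (n : ℕ) : List Bool := (List.range n).map r

lemma pre_length (r : ℕ → Bool) (n : ℕ) : (pre r n).length = n := by
  simp [pre]

lemma pre_eq_iff {r r' : ℕ → Bool} {n : ℕ} :
    pre r n = pre r' n ↔ ∀ i < n, r i = r' i := by
  rw [pre, pre, List.map_eq_map_iff]
  simp

/-- The encoded prefix, as an integer. -/
def code (r : ℕ → Bool) (n : ℕ) : ℤ := (Encodable.encode (pre r n) : ℤ)

lemma code_inj {r r' : ℕ → Bool} {n n' : ℕ} (h : code r n = code r' n') :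
    n = n' ∧ pre r n = pre r' n' := by
  rw [code, code] at h
  have h1 : Encodable.encode (pre r n) = Encodable.encode (pre r' n') := by
    exact_mod_cast h
  have h2 : pre r n = pre r' n' := Encodable.encode_injective h1
  refine ⟨?_, h2⟩
  rw [← pre_length r n, ← pre_length r' n', h2]

/-- The indicator sequence of the family of encoded prefixes of `r`. -/
noncomputable def ind (r : ℕ → Bool) : ℤ → ℤ :=
  (Set.range (code r)).indicator 1

lemma ind_bdd (r : ℕ → Bool) : ∃ C : ℤ, ∀ k, |ind r k| ≤ C := by
  refine ⟨1, fun k => ?_⟩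
  rw [ind]
  by_cases h : k ∈ Set.range (code r) <;> simp [Set.indicator_apply, h]

lemma support_diff_infinite {r r' : ℕ → Bool} (h : r ≠ r') :
    (Function.support (ind r - ind r')).Infinite := by
  obtain ⟨m, hm⟩ := Function.ne_iff.mp h
  refine Set.infinite_of_injective_forall_mem
    (f := fun n : ℕ => code r (m + 1 + n)) ?_ ?_
  · intro a b hab
    have := (code_inj hab).1
    omega
  · intro n
    have h1 : ind r (code r (m + 1 + n)) = 1 := by
      rw [ind, Set.indicator_of_mem (Set.mem_range_self _)]
      rfl
    have h2 : ind r' (code r (m + 1 + n)) = 0 := by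
      rw [ind]
      refine Set.indicator_of_notMem ?_ _
      rintro ⟨n', hn'⟩
      obtain ⟨hlen, hpre⟩ := code_inj hn'
      subst hlen
      have := pre_eq_iff.mp hpre m (by omega)
      exact hm this.symm
    simp only [Function.mem_support, Pi.sub_apply, h1, h2]
    norm_num

lemma continuum_le :
    Cardinal.continuum ≤ Cardinal.mk (boundedIntSeq ⧸ finitelySupported) := by
  have hinj : Function.Injective (fun r : ℕ → Bool =>
      (QuotientAddGroup.mk (⟨ind r, ind_bdd r⟩ : boundedIntSeq) :
        boundedIntSeq ⧸ finitelySupported)) := by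
    intro r r' h
    by_contra hne
    rw [QuotientAddGroup.eq] at h
    have hmem : (Function.support ((-(⟨ind r, ind_bdd r⟩ : boundedIntSeq)
        + ⟨ind r', ind_bdd r'⟩ : boundedIntSeq) : ℤ → ℤ)).Finite := h
    have hco : ((-(⟨ind r, ind_bdd r⟩ : boundedIntSeq)
        + ⟨ind r', ind_bdd r'⟩ : boundedIntSeq) : ℤ → ℤ) = ind r' - ind r := by
      ext k
      simp [sub_eq_neg_add]
    rw [hco] at hmem
    exact support_diff_infinite (fun he => hne he.symm) hmem
  have := Cardinal.mk_le_of_injective hinj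
  have hbool : Cardinal.mk (ℕ → Bool) = Cardinal.continuum := by
    rw [Cardinal.mk_arrow, Cardinal.mk_bool, Cardinal.mk_nat, Cardinal.lift_aleph0]
    norm_num [Cardinal.two_power_aleph0]
  rwa [hbool] at this

end SpeckerAux


/-- The additive group of bounded integer sequences modulo those with finitely
many nonzero entries is a free abelian group of cardinality `2^ℵ₀` (the
continuum). -/
theorem boundedIntSeq_mod_finitelySupported_free_continuum :
    Module.Free ℤ (boundedIntSeq ⧸ finitelySupported) ∧
    Cardinal.mk (boundedIntSeq ⧸ finitelySupported) = Cardinal.continuum := by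
  constructor
  · exact Module.Free.of_equiv SpeckerAux.quotEquiv.symm.toIntLinearEquiv
  · exact le_antisymm SpeckerAux.card_le SpeckerAux.continuum_le
end

section
/- In the finite CAR/Clifford setting with generators γ_{ij} (i,j ∈ [−N,N]) satisfying [γ_{ij}, γ_{kℓ}]₊ = 2δ_{iℓ}δ_{jk}, the normal-ordered spin operators s_{ij} = (1/2)Σ_ℓ :γ_{iℓ}γ_{ℓj}: satisfy the commutation relations [s_{ij}, s_{ℓm}] = δ_{jℓ}s_{im} − δ_{im}s_{ℓj} + δ_{jℓ}δ_{im}(ℓ−i), where the central term is independent of the cutoff N. -/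
open Finset

/-- The cutoff index set `[-N, N] ⊂ ℤ`. -/
noncomputable def cutoff (N : ℕ) : Finset ℤ := Finset.Icc (-(N : ℤ)) (N : ℤ)

/-- The normal-ordered spin operators
`s_{ij} = (1/2) Σ_ℓ :γ_{iℓ}γ_{ℓj}: = (1/2) Σ_ℓ γ_{iℓ}γ_{ℓj} − (N − i + 1/2)δ_{ij}`. -/
noncomputable def spinOp {A : Type*} [Ring A] [Algebra ℚ A] (N : ℕ)
    (γ : ℤ → ℤ → A) (i j : ℤ) : A :=
  (2 : ℚ)⁻¹ • ∑ l ∈ cutoff N, γ i l * γ l j -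
    (if i = j then ((N : ℚ) - (i : ℚ) + (2 : ℚ)⁻¹) • (1 : A) else 0)

lemma quad_comm {A : Type*} [Ring A] (a b c d e1 e2 e3 e4 : A)
    (h1 : b*c + c*b = e1) (h2 : b*d + d*b = e2)
    (h3 : a*c + c*a = e3) (h4 : a*d + d*a = e4) :
    a*b*(c*d) - c*d*(a*b) = a*e1*d - a*c*e2 + e3*(d*b) - c*e4*b := by
  rw [← h1, ← h2, ← h3, ← h4]; noncomm_ring

lemma core {A : Type*} [Ring A] (N : ℕ) (γ : ℤ → ℤ → A)
    (hγ : ∀ i ∈ cutoff N, ∀ j ∈ cutoff N, ∀ k ∈ cutoff N, ∀ l ∈ cutoff N,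
      γ i j * γ k l + γ k l * γ i j = if i = l ∧ j = k then (2 : A) else 0)
    (i : ℤ) (hi : i ∈ cutoff N) (j : ℤ) (hj : j ∈ cutoff N)
    (l : ℤ) (hl : l ∈ cutoff N) (m : ℤ) (hm : m ∈ cutoff N) :
    (∑ a ∈ cutoff N, γ i a * γ a j) * ∑ b ∈ cutoff N, γ l b * γ b m
      - (∑ b ∈ cutoff N, γ l b * γ b m) * ∑ a ∈ cutoff N, γ i a * γ a j
    = (if j = l then ∑ a ∈ cutoff N, (2:A) * (γ i a * γ a m) else 0)
      - (if i = m then ∑ a ∈ cutoff N, (2:A) * (γ l a * γ a j) else 0) := by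
  rw [Finset.sum_mul_sum, Finset.sum_mul_sum, Finset.sum_comm (s := cutoff N) (t := cutoff N)
      (f := fun b a => γ l b * γ b m * (γ i a * γ a j)), ← Finset.sum_sub_distrib]
  simp only [← Finset.sum_sub_distrib]
  have step : ∀ a ∈ cutoff N, ∀ b ∈ cutoff N,
      γ i a * γ a j * (γ l b * γ b m) - γ l b * γ b m * (γ i a * γ a j)
      = γ i a * (if a = b ∧ j = l then (2:A) else 0) * γ b m
        - γ i a * γ l b * (if a = m ∧ j = b then (2:A) else 0)
        + (if i = b ∧ a = l then (2:A) else 0) * (γ b m * γ a j)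
        - γ l b * (if i = m ∧ a = b then (2:A) else 0) * γ a j := by
    intro a ha b hb
    exact quad_comm _ _ _ _ _ _ _ _ (hγ a ha j hj l hl b hb) (hγ a ha j hj b hb m hm)
      (hγ i hi a ha l hl b hb) (hγ i hi a ha b hb m hm)
  rw [Finset.sum_congr rfl (fun a ha => Finset.sum_congr rfl (fun b hb => step a ha b hb))]
  simp only [mul_ite, ite_mul, mul_zero, zero_mul, mul_one, one_mul]
  simp only [ite_and]
  simp only [Finset.sum_sub_distrib, Finset.sum_add_distrib, Finset.sum_ite_eq,
    Finset.sum_ite_irrel, Finset.sum_ite_eq', Finset.sum_const_zero, hj, hm, hi, hl, if_true]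
  simp only [Finset.sum_ite_mem, Finset.inter_self, Finset.sum_ite_irrel, Finset.sum_const_zero]
  noncomm_ring

/-- In the finite cutoff Clifford algebra with generators `γ_{ij}`, `i,j ∈ [-N,N]`,
satisfying `[γ_{ij}, γ_{kℓ}]₊ = 2δ_{iℓ}δ_{jk}`, the normal-ordered spin operators
satisfy `[s_{ij}, s_{ℓm}] = δ_{jℓ}s_{im} − δ_{im}s_{ℓj} + δ_{jℓ}δ_{im}(ℓ−i)`, with
central term independent of the cutoff `N`. -/
theorem spinOp_commutation {A : Type*} [Ring A] [Algebra ℚ A] (N : ℕ)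
    (γ : ℤ → ℤ → A)
    (hγ : ∀ i ∈ cutoff N, ∀ j ∈ cutoff N, ∀ k ∈ cutoff N, ∀ l ∈ cutoff N,
      γ i j * γ k l + γ k l * γ i j =
        if i = l ∧ j = k then (2 : A) else 0)
    (i : ℤ) (hi : i ∈ cutoff N) (j : ℤ) (hj : j ∈ cutoff N)
    (l : ℤ) (hl : l ∈ cutoff N) (m : ℤ) (hm : m ∈ cutoff N) :
    spinOp N γ i j * spinOp N γ l m - spinOp N γ l m * spinOp N γ i j =
      (if j = l then spinOp N γ i m else 0) -
      (if i = m then spinOp N γ l j else 0) +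
      (if j = l ∧ i = m then ((l : ℚ) - (i : ℚ)) • (1 : A) else 0) := by
  have hcentral : ∀ (p q : ℤ) (r : ℚ) (z : A),
      (if p = q then r • (1:A) else 0) * z = z * (if p = q then r • (1:A) else 0) := by
    intro p q r z
    split_ifs <;> simp [smul_mul_assoc, mul_smul_comm]
  have key : spinOp N γ i j * spinOp N γ l m - spinOp N γ l m * spinOp N γ i j
      = ((2:ℚ)⁻¹ • ∑ a ∈ cutoff N, γ i a * γ a j) * ((2:ℚ)⁻¹ • ∑ b ∈ cutoff N, γ l b * γ b m)
        - ((2:ℚ)⁻¹ • ∑ b ∈ cutoff N, γ l b * γ b m) * ((2:ℚ)⁻¹ • ∑ a ∈ cutoff N, γ i a * γ a j) := by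
    unfold spinOp
    set x := (2:ℚ)⁻¹ • ∑ a ∈ cutoff N, γ i a * γ a j with hx
    set y := (2:ℚ)⁻¹ • ∑ b ∈ cutoff N, γ l b * γ b m with hy
    set c := (if i = j then ((N : ℚ) - (i : ℚ) + (2 : ℚ)⁻¹) • (1 : A) else 0) with hc
    set d := (if l = m then ((N : ℚ) - (l : ℚ) + (2 : ℚ)⁻¹) • (1 : A) else 0) with hd
    have h1 : c * y = y * c := hcentral _ _ _ _
    have h2 : d * x = x * d := hcentral _ _ _ _
    have h3 : c * d = d * c := hcentral _ _ _ _
    have : (x - c)*(y - d) - (y - d)*(x - c)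
        = x*y - y*x + (d*x - x*d) - (c*y - y*c) + (c*d - d*c) := by noncomm_ring
    rw [this, h1, h2, h3]; abel
  rw [key, smul_mul_assoc, smul_mul_assoc, mul_smul_comm, mul_smul_comm, smul_smul, smul_smul,
    ← smul_sub, core N γ hγ i hi j hj l hl m hm]
  have h2s : ∀ x : A, (2:A) * x = (2:ℚ) • x := by
    intro x; rw [Algebra.smul_def, map_ofNat]
  simp only [h2s, ← Finset.smul_sum]
  by_cases hjl : j = l <;> by_cases him : i = m <;>
    simp only [spinOp, hjl, him, if_true, ite_true, ite_false, eq_self_iff_true, and_self,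
      and_false, false_and, and_true, true_and, if_false, sub_zero, zero_sub, smul_zero,
      smul_sub, smul_smul, if_neg, not_false_iff] <;>
    first
      | module
      | (rw [if_neg fun h => hjl h.symm]; module)
end

section
/- In the finite cutoff Clifford algebra, the identity Σ_{ℓ,m} [s_{ℓm}γ_{mℓ}, γ_{ij}]₊ = 6 s_{ij} − 4i·δ_{ij} holds, where [a,b]₊ = ab + ba. -/
open Finset

lemma half_two {A : Type*} [Ring A] [Algebra ℚ A] (x : A) :
    (2 : ℚ)⁻¹ • ((2 : A) * x) = x := by
  rw [two_mul, ← two_smul ℚ x, smul_smul]; norm_num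

lemma half_two' {A : Type*} [Ring A] [Algebra ℚ A] (x : A) :
    (2 : ℚ)⁻¹ • (x * (2 : A)) = x := by
  rw [mul_two, ← two_smul ℚ x, smul_smul]; norm_num

lemma spin_comm {A : Type*} [Ring A] [Algebra ℚ A] (N : ℕ) (γ : ℤ → ℤ → A)
    (hγ : ∀ i ∈ cutoff N, ∀ j ∈ cutoff N, ∀ k ∈ cutoff N, ∀ l ∈ cutoff N,
      γ i j * γ k l + γ k l * γ i j = if i = l ∧ j = k then (2 : A) else 0)
    (l : ℤ) (hl : l ∈ cutoff N) (m : ℤ) (hm : m ∈ cutoff N)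
    (i : ℤ) (hi : i ∈ cutoff N) (j : ℤ) (hj : j ∈ cutoff N) :
    spinOp N γ l m * γ i j = γ i j * spinOp N γ l m +
      ((if m = i then γ l j else 0) - (if l = j then γ i m else 0)) := by
  have key : ∀ p ∈ cutoff N, (γ l p * γ p m) * γ i j
      = γ i j * (γ l p * γ p m)
        + ((if p = j ∧ m = i then γ l p * (2 : A) else 0)
          - (if l = j ∧ p = i then (2 : A) * γ p m else 0)) := by
    intro p hp
    have e1 : γ p m * γ i j = (if p = j ∧ m = i then (2 : A) else 0) - γ i j * γ p m :=
      eq_sub_iff_add_eq.mpr (hγ p hp m hm i hi j hj)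
    have e2 : γ l p * γ i j = (if l = j ∧ p = i then (2 : A) else 0) - γ i j * γ l p :=
      eq_sub_iff_add_eq.mpr (hγ l hl p hp i hi j hj)
    calc (γ l p * γ p m) * γ i j = γ l p * (γ p m * γ i j) := by rw [mul_assoc]
      _ = γ l p * ((if p = j ∧ m = i then (2 : A) else 0) - γ i j * γ p m) := by rw [e1]
      _ = γ l p * (if p = j ∧ m = i then (2 : A) else 0) - (γ l p * γ i j) * γ p m := by
          rw [mul_sub, mul_assoc]
      _ = γ l p * (if p = j ∧ m = i then (2 : A) else 0)
          - ((if l = j ∧ p = i then (2 : A) else 0) - γ i j * γ l p) * γ p m := by rw [e2]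
      _ = _ := by split_ifs <;> noncomm_ring
  have hsum : (∑ p ∈ cutoff N, γ l p * γ p m) * γ i j
      = γ i j * (∑ p ∈ cutoff N, γ l p * γ p m)
        + ((if m = i then γ l j * (2 : A) else 0)
          - (if l = j then (2 : A) * γ i m else 0)) := by
    rw [Finset.sum_mul, Finset.sum_congr rfl key, Finset.sum_add_distrib,
      Finset.sum_sub_distrib, ← Finset.mul_sum]
    congr 1
    congr 1
    · simp only [ite_and]
      rw [Finset.sum_ite_eq' (cutoff N) j (fun p => if m = i then γ l p * 2 else 0), if_pos hj]
    · simp only [ite_and]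
      by_cases h : l = j
      · simp only [h, if_true]
        rw [Finset.sum_ite_eq' (cutoff N) i (fun p => (2:A) * γ p m), if_pos hi]
      · simp [h]
  have hb : (if l = m then ((N : ℚ) - (l:ℚ) + (2:ℚ)⁻¹) • (1 : A) else 0) * γ i j
      = γ i j * (if l = m then ((N : ℚ) - (l:ℚ) + (2:ℚ)⁻¹) • (1 : A) else 0) := by
    split <;> simp [smul_mul_assoc, mul_smul_comm]
  rw [spinOp, sub_mul, mul_sub, smul_mul_assoc, hsum, hb, smul_add, smul_sub,
    mul_smul_comm]
  have h1 : (2:ℚ)⁻¹ • (if m = i then γ l j * (2:A) else 0) = (if m = i then γ l j else 0) := by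
    split <;> simp [half_two']
  have h2 : (2:ℚ)⁻¹ • (if l = j then (2:A) * γ i m else 0) = (if l = j then γ i m else 0) := by
    split <;> simp [half_two]
  rw [h1, h2]
  abel

lemma term_eq {A : Type*} [Ring A] [Algebra ℚ A] (N : ℕ) (γ : ℤ → ℤ → A)
    (hγ : ∀ i ∈ cutoff N, ∀ j ∈ cutoff N, ∀ k ∈ cutoff N, ∀ l ∈ cutoff N,
      γ i j * γ k l + γ k l * γ i j = if i = l ∧ j = k then (2 : A) else 0)
    (i : ℤ) (hi : i ∈ cutoff N) (j : ℤ) (hj : j ∈ cutoff N)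
    (l : ℤ) (hl : l ∈ cutoff N) (m : ℤ) (hm : m ∈ cutoff N) :
    (spinOp N γ l m * γ m l) * γ i j + γ i j * (spinOp N γ l m * γ m l)
      = spinOp N γ l m * (if m = j ∧ l = i then (2 : A) else 0)
        - ((if m = i then γ l j else 0) - (if l = j then γ i m else 0)) * γ m l := by
  have e : γ m l * γ i j = (if m = j ∧ l = i then (2 : A) else 0) - γ i j * γ m l :=
    eq_sub_iff_add_eq.mpr (hγ m hm l hl i hi j hj)
  have c := spin_comm N γ hγ l hl m hm i hi j hj
  calc (spinOp N γ l m * γ m l) * γ i j + γ i j * (spinOp N γ l m * γ m l)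
      = spinOp N γ l m * ((if m = j ∧ l = i then (2 : A) else 0) - γ i j * γ m l)
        + γ i j * (spinOp N γ l m * γ m l) := by rw [mul_assoc, e]
    _ = spinOp N γ l m * (if m = j ∧ l = i then (2 : A) else 0)
        - (spinOp N γ l m * γ i j) * γ m l + γ i j * (spinOp N γ l m * γ m l) := by
        rw [mul_sub, mul_assoc]
    _ = spinOp N γ l m * (if m = j ∧ l = i then (2 : A) else 0)
        - (γ i j * spinOp N γ l m
            + ((if m = i then γ l j else 0) - (if l = j then γ i m else 0))) * γ m l
        + γ i j * (spinOp N γ l m * γ m l) := by rw [c]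
    _ = _ := by noncomm_ring

lemma card_cutoff (N : ℕ) : (cutoff N).card = 2 * N + 1 := by
  simp [cutoff, Int.card_Icc]; omega

lemma mul_two_eq_smul {A : Type*} [Ring A] [Algebra ℚ A] (x : A) :
    x * (2 : A) = (2 : ℚ) • x := by rw [mul_two, two_smul]

/-- In the finite cutoff Clifford algebra,
`Σ_{ℓ,m} [s_{ℓm}γ_{mℓ}, γ_{ij}]₊ = 6 s_{ij} − 4i δ_{ij}`. -/
theorem anticommutator_sum_spin_gamma {A : Type*} [Ring A] [Algebra ℚ A] (N : ℕ)
    (γ : ℤ → ℤ → A)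
    (hγ : ∀ i ∈ cutoff N, ∀ j ∈ cutoff N, ∀ k ∈ cutoff N, ∀ l ∈ cutoff N,
      γ i j * γ k l + γ k l * γ i j =
        if i = l ∧ j = k then (2 : A) else 0)
    (i : ℤ) (hi : i ∈ cutoff N) (j : ℤ) (hj : j ∈ cutoff N) :
    ∑ l ∈ cutoff N, ∑ m ∈ cutoff N,
        ((spinOp N γ l m * γ m l) * γ i j + γ i j * (spinOp N γ l m * γ m l)) =
      (6 : ℚ) • spinOp N γ i j -
        (if i = j then ((4 : ℚ) * (i : ℚ)) • (1 : A) else 0) := by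
  have h1 := Finset.sum_congr rfl fun l (hl : l ∈ cutoff N) =>
    Finset.sum_congr rfl fun m (hm : m ∈ cutoff N) => term_eq N γ hγ i hi j hj l hl m hm
  rw [h1]
  simp only [sub_mul, Finset.sum_sub_distrib]
  have hA : (∑ l ∈ cutoff N, ∑ m ∈ cutoff N,
      spinOp N γ l m * (if m = j ∧ l = i then (2:A) else 0)) = spinOp N γ i j * 2 := by
    simp only [mul_ite, mul_zero, ite_and]
    rw [Finset.sum_congr rfl (fun l _ => by
      rw [Finset.sum_ite_eq' (cutoff N) j (fun m => if l = i then spinOp N γ l m * 2 else 0),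
        if_pos hj])]
    rw [Finset.sum_ite_eq' (cutoff N) i (fun l => spinOp N γ l j * 2), if_pos hi]
  have hB : (∑ l ∈ cutoff N, ∑ m ∈ cutoff N, (if m = i then γ l j else 0) * γ m l)
      = ∑ l ∈ cutoff N, γ l j * γ i l := by
    refine Finset.sum_congr rfl fun l _ => ?_
    simp only [ite_mul, zero_mul]
    rw [Finset.sum_ite_eq' (cutoff N) i (fun m => γ l j * γ m l), if_pos hi]
  have hC : (∑ l ∈ cutoff N, ∑ m ∈ cutoff N, (if l = j then γ i m else 0) * γ m l)
      = ∑ m ∈ cutoff N, γ i m * γ m j := by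
    simp only [ite_mul, zero_mul]
    rw [Finset.sum_congr rfl (fun l (_ : l ∈ cutoff N) => show
        (∑ m ∈ cutoff N, if l = j then γ i m * γ m l else 0)
          = if l = j then ∑ m ∈ cutoff N, γ i m * γ m l else 0 by split_ifs <;> simp)]
    rw [Finset.sum_ite_eq' (cutoff N) j (fun l => ∑ m ∈ cutoff N, γ i m * γ m l), if_pos hj]
  have hD : (∑ l ∈ cutoff N, γ l j * γ i l)
      = (2*N+1) • (if j = i then (2:A) else 0) - ∑ l ∈ cutoff N, γ i l * γ l j := by
    rw [eq_sub_iff_add_eq, ← Finset.sum_add_distrib,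
      Finset.sum_congr rfl (fun l hl => hγ l hl j hj i hi l hl)]
    simp [Finset.sum_const, card_cutoff]
  have hS : (∑ l ∈ cutoff N, γ i l * γ l j)
      = (2:ℚ) • spinOp N γ i j
        + (if i = j then ((2*(N:ℚ) - 2*(i:ℚ) + 1)) • (1:A) else 0) := by
    rw [spinOp]
    split_ifs with h
    · module
    · simp
  rw [hA, hB, hC, hD, hS, mul_two_eq_smul]
  have h2 : ((2:A)) = (2:ℚ) • (1:A) := by rw [two_smul, one_add_one_eq_two]
  by_cases h : i = j
  · subst h
    simp only [if_pos rfl, h2, ← Nat.cast_smul_eq_nsmul ℚ]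
    push_cast
    module
  · simp only [if_neg h, if_neg (fun hh : j = i => h hh.symm), smul_zero]
    module
end

section
/- The cutoff cubic Dirac operator 𝔻 = Σ_{i,j} e_{ij}γ_{ji} + (1/3)Σ_{i,j} :s_{ij}γ_{ji}: satisfies [𝔻, γ_{ij}]₊ = 2t_{ij}, where t_{ij} = e_{ij} + s_{ij}. -/
open Finset

/-- The normal-ordered cubic sum
`Σ_{i,j} :s_{ij}γ_{ji}: = Σ_{i>j} s_{ij}γ_{ji} + Σ_{i≤j} γ_{ji}s_{ij}`. -/
noncomputable def normalOrderedCubic {A : Type*} [Ring A] [Algebra ℚ A] (N : ℕ)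
    (γ : ℤ → ℤ → A) : A :=
  ∑ i ∈ cutoff N, ∑ j ∈ cutoff N,
    if j < i then spinOp N γ i j * γ j i else γ j i * spinOp N γ i j

/-- The cutoff cubic Dirac operator
`𝔻 = Σ_{i,j} e_{ij}γ_{ji} + (1/3) Σ_{i,j} :s_{ij}γ_{ji}:`. -/
noncomputable def cubicDirac {A : Type*} [Ring A] [Algebra ℚ A] (N : ℕ)
    (E γ : ℤ → ℤ → A) : A :=
  (∑ i ∈ cutoff N, ∑ j ∈ cutoff N, E i j * γ j i) +
    (3 : ℚ)⁻¹ • normalOrderedCubic N γ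

/-- The total current `t_{ij} = e_{ij} + s_{ij}`. -/
noncomputable def totalCurrent {A : Type*} [Ring A] [Algebra ℚ A] (N : ℕ)
    (E γ : ℤ → ℤ → A) (i j : ℤ) : A :=
  E i j + spinOp N γ i j

set_option maxHeartbeats 2000000 in
/-- The cutoff cubic Dirac operator satisfies `[𝔻, γ_{ij}]₊ = 2 t_{ij}` where
`t_{ij} = e_{ij} + s_{ij}`; the `e`-sector has relations of level `k` and commutes
with the Clifford sector. -/
theorem dirac_anticommutator_gamma {A : Type*} [Ring A] [Algebra ℚ A]
    (N : ℕ) (k : ℤ) (E γ : ℤ → ℤ → A)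
    (hγ : ∀ i ∈ cutoff N, ∀ j ∈ cutoff N, ∀ l ∈ cutoff N, ∀ m ∈ cutoff N,
      γ i j * γ l m + γ l m * γ i j = if i = m ∧ j = l then (2 : A) else 0)
    (hE : ∀ i ∈ cutoff N, ∀ j ∈ cutoff N, ∀ l ∈ cutoff N, ∀ m ∈ cutoff N,
      E i j * E l m - E l m * E i j =
        (if j = l then E i m else 0) - (if i = m then E l j else 0) +
          (if j = l ∧ i = m then ((k * (l - i) : ℤ) : ℚ) • (1 : A) else 0))
    (hcomm : ∀ i ∈ cutoff N, ∀ j ∈ cutoff N, ∀ l ∈ cutoff N, ∀ m ∈ cutoff N,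
      E i j * γ l m = γ l m * E i j)
    (i : ℤ) (hi : i ∈ cutoff N) (j : ℤ) (hj : j ∈ cutoff N) :
    cubicDirac N E γ * γ i j + γ i j * cubicDirac N E γ =
      (2 : ℚ) • totalCurrent N E γ i j := by
  have hi' : -(N:ℤ) ≤ i ∧ i ≤ N := by simpa [cutoff, Finset.mem_Icc] using hi
  have hj' : -(N:ℤ) ≤ j ∧ j ≤ N := by simpa [cutoff, Finset.mem_Icc] using hj
  -- generic single-index picking lemma
  have pick : ∀ (c : ℤ), c ∈ cutoff N → ∀ f : ℤ → A,
      (∑ x ∈ cutoff N, if x = c then f x else 0) = f c := by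
    intro c hc f
    rw [Finset.sum_ite_eq' (cutoff N) c f, if_pos hc]
  have pick2 : ∀ (x : A),
      (∑ a ∈ cutoff N, ∑ b ∈ cutoff N, if a = i ∧ b = j then x else 0) = x := by
    intro x
    have h1 : ∀ a, (∑ b ∈ cutoff N, if a = i ∧ b = j then x else 0)
        = if a = i then x else 0 := by
      intro a
      by_cases h : a = i
      · simp only [h, true_and]
        exact pick j hj (fun _ => x)
      · simp [h]
    rw [Finset.sum_congr rfl fun a _ => h1 a]
    exact pick i hi (fun _ => x)
  -- the E-part anticommutator
  have hEpart : (∑ a ∈ cutoff N, ∑ b ∈ cutoff N, E a b * γ b a) * γ i j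
      + γ i j * (∑ a ∈ cutoff N, ∑ b ∈ cutoff N, E a b * γ b a) = E i j * 2 := by
    rw [Finset.sum_mul, Finset.mul_sum, ← Finset.sum_add_distrib]
    have main : ∀ a ∈ cutoff N, (∑ b ∈ cutoff N, E a b * γ b a) * γ i j
        + γ i j * (∑ b ∈ cutoff N, E a b * γ b a)
        = ∑ b ∈ cutoff N, if a = i ∧ b = j then E i j * 2 else 0 := by
      intro a ha
      rw [Finset.sum_mul, Finset.mul_sum, ← Finset.sum_add_distrib]
      refine Finset.sum_congr rfl fun b hb => ?_
      have h1 := hγ b hb a ha i hi j hj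
      have h2 := hcomm a ha b hb i hi j hj
      have h3 : γ i j * (E a b * γ b a) = E a b * (γ i j * γ b a) := by
        rw [← mul_assoc, ← h2, mul_assoc]
      rw [h3, mul_assoc, ← mul_add, h1]
      by_cases hc : b = j ∧ a = i
      · rw [if_pos hc, if_pos ⟨hc.2, hc.1⟩, hc.1, hc.2]
      · rw [if_neg hc, if_neg fun hh => hc ⟨hh.2, hh.1⟩, mul_zero]
    rw [Finset.sum_congr rfl main]
    exact pick2 _
  -- commutator of spin operators with γ i j
  have hS : ∀ a ∈ cutoff N, ∀ b ∈ cutoff N,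
      spinOp N γ a b * γ i j - γ i j * spinOp N γ a b
        = (if b = i then γ a j else 0) - (if a = j then γ i b else 0) := by
    intro a ha b hb
    unfold spinOp
    have hD : (if a = b then ((N : ℚ) - (a : ℚ) + (2 : ℚ)⁻¹) • (1 : A) else 0) * γ i j
        = γ i j * (if a = b then ((N : ℚ) - (a : ℚ) + (2 : ℚ)⁻¹) • (1 : A) else 0) := by
      split_ifs with h
      · rw [smul_mul_assoc, mul_smul_comm, one_mul, mul_one]
      · rw [zero_mul, mul_zero]
    have hQ : (∑ l ∈ cutoff N, γ a l * γ l b) * γ i j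
        - γ i j * (∑ l ∈ cutoff N, γ a l * γ l b)
        = (if b = i then γ a j * 2 else 0) - (if a = j then 2 * γ i b else 0) := by
      rw [Finset.sum_mul, Finset.mul_sum, ← Finset.sum_sub_distrib]
      have main : ∀ l ∈ cutoff N, γ a l * γ l b * γ i j - γ i j * (γ a l * γ l b)
          = (if l = j then (if b = i then γ a l * 2 else 0) else 0)
            - (if l = i then (if a = j then 2 * γ l b else 0) else 0) := by
        intro l hl
        have h1 := hγ l hl b hb i hi j hj
        have h2 := hγ a ha l hl i hi j hj
        have base : γ a l * γ l b * γ i j - γ i j * (γ a l * γ l b)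
            = γ a l * (γ l b * γ i j + γ i j * γ l b)
              - (γ a l * γ i j + γ i j * γ a l) * γ l b := by noncomm_ring
        rw [base, h1, h2]
        have s1 : γ a l * (if l = j ∧ b = i then (2:A) else 0)
            = if l = j then (if b = i then γ a l * 2 else 0) else 0 := by
          split_ifs <;> simp_all
        have s2 : (if a = j ∧ l = i then (2:A) else 0) * γ l b
            = if l = i then (if a = j then 2 * γ l b else 0) else 0 := by
          split_ifs <;> simp_all
        rw [s1, s2]
      rw [Finset.sum_congr rfl main, Finset.sum_sub_distrib,
        pick j hj (fun l => if b = i then γ a l * 2 else 0),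
        pick i hi (fun l => if a = j then 2 * γ l b else 0)]
    have expand : ∀ Q D G : A, D * G = G * D →
        ((2:ℚ)⁻¹ • Q - D) * G - G * ((2:ℚ)⁻¹ • Q - D)
          = (2:ℚ)⁻¹ • (Q * G - G * Q) := by
      intro Q D G h
      rw [sub_mul, mul_sub, smul_mul_assoc, mul_smul_comm, smul_sub, h]
      abel
    rw [expand _ _ _ hD, hQ, smul_sub]
    congr 1
    · split_ifs with h
      · rw [mul_two]; module
      · exact smul_zero _
    · split_ifs with h
      · rw [two_mul]; module
      · exact smul_zero _
  -- the per-term anticommutator of the cubic part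
  have key : ∀ a ∈ cutoff N, ∀ b ∈ cutoff N,
      (if b < a then spinOp N γ a b * γ b a else γ b a * spinOp N γ a b) * γ i j
        + γ i j * (if b < a then spinOp N γ a b * γ b a else γ b a * spinOp N γ a b)
      = (if a = i ∧ b = j then spinOp N γ i j * 2 else 0)
        + ((if a = j then (if b < a then γ i b * γ b a else -(γ b a * γ i b)) else 0)
          + (if b = i then (if b < a then -(γ a j * γ b a) else γ b a * γ a j) else 0)) := by
    intro a ha b hb
    have h1 := hγ b hb a ha i hi j hj
    have h2 := hS a ha b hb
    by_cases hba : b < a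
    · simp only [if_pos hba]
      have base : spinOp N γ a b * γ b a * γ i j + γ i j * (spinOp N γ a b * γ b a)
          = spinOp N γ a b * (γ b a * γ i j + γ i j * γ b a)
            - (spinOp N γ a b * γ i j - γ i j * spinOp N γ a b) * γ b a := by noncomm_ring
      rw [base, h1, h2]
      have s1 : spinOp N γ a b * (if b = j ∧ a = i then (2:A) else 0)
          = if a = i ∧ b = j then spinOp N γ i j * 2 else 0 := by
        by_cases hc : b = j ∧ a = i
        · rw [if_pos hc, if_pos ⟨hc.2, hc.1⟩, hc.1, hc.2]
        · rw [if_neg hc, if_neg fun hh => hc ⟨hh.2, hh.1⟩, mul_zero]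
      have s2 : ((if b = i then γ a j else 0) - (if a = j then γ i b else 0)) * γ b a
          = (if b = i then γ a j * γ b a else 0) - (if a = j then γ i b * γ b a else 0) := by
        rw [sub_mul, ite_mul, ite_mul, zero_mul]
      rw [s1, s2]
      split_ifs <;> abel
    · simp only [if_neg hba]
      have base : γ b a * spinOp N γ a b * γ i j + γ i j * (γ b a * spinOp N γ a b)
          = γ b a * (spinOp N γ a b * γ i j - γ i j * spinOp N γ a b)
            + (γ b a * γ i j + γ i j * γ b a) * spinOp N γ a b := by noncomm_ring
      rw [base, h1, h2]
      have s1 : (if b = j ∧ a = i then (2:A) else 0) * spinOp N γ a b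
          = if a = i ∧ b = j then spinOp N γ i j * 2 else 0 := by
        by_cases hc : b = j ∧ a = i
        · rw [if_pos hc, if_pos ⟨hc.2, hc.1⟩, hc.1, hc.2, two_mul, ← mul_two]
        · rw [if_neg hc, if_neg fun hh => hc ⟨hh.2, hh.1⟩, zero_mul]
      have s2 : γ b a * ((if b = i then γ a j else 0) - (if a = j then γ i b else 0))
          = (if b = i then γ b a * γ a j else 0) - (if a = j then γ b a * γ i b else 0) := by
        rw [mul_sub, mul_ite, mul_ite, mul_zero]
      rw [s1, s2]
      split_ifs <;> abel
  -- the F cross-sum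
  have hF : (∑ a ∈ cutoff N, ∑ b ∈ cutoff N,
        if a = j then (if b < a then γ i b * γ b a else -(γ b a * γ i b)) else 0)
      = (∑ l ∈ cutoff N, γ i l * γ l j)
        - ((N:ℤ) + 1 - j).toNat • (if j = i then (2:A) else 0) := by
    have step1 : ∀ a ∈ cutoff N, (∑ b ∈ cutoff N,
        if a = j then (if b < a then γ i b * γ b a else -(γ b a * γ i b)) else 0)
        = if a = j then (∑ b ∈ cutoff N,
            if b < a then γ i b * γ b a else -(γ b a * γ i b)) else 0 := by
      intro a _; split_ifs <;> simp
    rw [Finset.sum_congr rfl step1,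
      pick j hj (fun a => ∑ b ∈ cutoff N, if b < a then γ i b * γ b a else -(γ b a * γ i b))]
    have step2 : ∀ b ∈ cutoff N, (if b < j then γ i b * γ b j else -(γ b j * γ i b))
        = γ i b * γ b j - (if b < j then 0 else (if j = i then (2:A) else 0)) := by
      intro b hb
      have h1 := hγ b hb j hj i hi b hb
      have h1' : γ b j * γ i b + γ i b * γ b j = if j = i then (2:A) else 0 := by
        simpa using h1
      by_cases h : b < j
      · rw [if_pos h, if_pos h, sub_zero]
      · rw [if_neg h, if_neg h]
        by_cases h2 : j = i
        · rw [if_pos h2] at h1'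
          rw [if_pos h2, ← h1']
          abel
        · rw [if_neg h2] at h1'
          rw [if_neg h2, sub_zero]
          exact neg_eq_of_add_eq_zero_right h1'
    rw [Finset.sum_congr rfl step2, Finset.sum_sub_distrib]
    congr 1
    rw [Finset.sum_ite, Finset.sum_const_zero, zero_add, Finset.sum_const]
    congr 1
    have hfil : (cutoff N).filter (fun b => ¬ b < j) = Finset.Icc j (N:ℤ) := by
      ext x
      simp only [cutoff, Finset.mem_filter, Finset.mem_Icc, not_lt]
      omega
    rw [hfil, Int.card_Icc]
  -- the G cross-sum
  have hG : (∑ a ∈ cutoff N, ∑ b ∈ cutoff N,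
        if b = i then (if b < a then -(γ a j * γ b a) else γ b a * γ a j) else 0)
      = (∑ l ∈ cutoff N, γ i l * γ l j)
        - ((N:ℤ) - i).toNat • (if j = i then (2:A) else 0) := by
    have step1 : ∀ a ∈ cutoff N, (∑ b ∈ cutoff N,
        if b = i then (if b < a then -(γ a j * γ b a) else γ b a * γ a j) else 0)
        = if i < a then -(γ a j * γ i a) else γ i a * γ a j :=
      fun a _ => pick i hi (fun b => if b < a then -(γ a j * γ b a) else γ b a * γ a j)
    rw [Finset.sum_congr rfl step1]
    have step2 : ∀ a ∈ cutoff N, (if i < a then -(γ a j * γ i a) else γ i a * γ a j)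
        = γ i a * γ a j - (if i < a then (if j = i then (2:A) else 0) else 0) := by
      intro a ha
      have h1 := hγ a ha j hj i hi a ha
      have h1' : γ a j * γ i a + γ i a * γ a j = if j = i then (2:A) else 0 := by
        simpa using h1
      by_cases h : i < a
      · rw [if_pos h, if_pos h]
        by_cases h2 : j = i
        · rw [if_pos h2] at h1'
          rw [if_pos h2, ← h1']
          abel
        · rw [if_neg h2] at h1'
          rw [if_neg h2, sub_zero]
          exact neg_eq_of_add_eq_zero_right h1'
      · rw [if_neg h, if_neg h, sub_zero]
    rw [Finset.sum_congr rfl step2, Finset.sum_sub_distrib]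
    congr 1
    rw [Finset.sum_ite, Finset.sum_const_zero, add_zero, Finset.sum_const]
    congr 1
    have hfil : (cutoff N).filter (fun a => i < a) = Finset.Icc (i+1) (N:ℤ) := by
      ext x
      simp only [cutoff, Finset.mem_filter, Finset.mem_Icc]
      omega
    rw [hfil, Int.card_Icc]
    omega
  -- the cubic anticommutator
  have hq2 : (2:A) = (2:ℚ) • (1:A) := by
    rw [two_smul, one_add_one_eq_two]
  have hC : normalOrderedCubic N γ * γ i j + γ i j * normalOrderedCubic N γ
      = (6:ℚ) • spinOp N γ i j := by
    unfold normalOrderedCubic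
    rw [Finset.sum_mul, Finset.mul_sum, ← Finset.sum_add_distrib]
    have inner : ∀ a ∈ cutoff N,
        (∑ b ∈ cutoff N,
          if b < a then spinOp N γ a b * γ b a else γ b a * spinOp N γ a b) * γ i j
        + γ i j * (∑ b ∈ cutoff N,
          if b < a then spinOp N γ a b * γ b a else γ b a * spinOp N γ a b)
        = ∑ b ∈ cutoff N,
            ((if a = i ∧ b = j then spinOp N γ i j * 2 else 0)
            + ((if a = j then (if b < a then γ i b * γ b a else -(γ b a * γ i b)) else 0)
              + (if b = i then (if b < a then -(γ a j * γ b a) else γ b a * γ a j) else 0))) := by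
      intro a ha
      rw [Finset.sum_mul, Finset.mul_sum, ← Finset.sum_add_distrib]
      exact Finset.sum_congr rfl fun b hb => key a ha b hb
    rw [Finset.sum_congr rfl inner]
    simp only [Finset.sum_add_distrib]
    rw [pick2 (spinOp N γ i j * 2), hF, hG]
    unfold spinOp
    by_cases hij : i = j
    · subst hij
      simp only [eq_self_iff_true, ite_true]
      have e1 : ((((N:ℤ) + 1 - i).toNat : ℕ) : ℚ) = (N:ℚ) + 1 - (i:ℚ) := by
        rw [← Int.cast_natCast (R := ℚ), Int.toNat_of_nonneg (by omega)]
        push_cast; ring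
      have e2 : ((((N:ℤ) - i).toNat : ℕ) : ℚ) = (N:ℚ) - (i:ℚ) := by
        rw [← Int.cast_natCast (R := ℚ), Int.toNat_of_nonneg (by omega)]
        push_cast; ring
      rw [mul_two, hq2, ← Nat.cast_smul_eq_nsmul ℚ (((N:ℤ) + 1 - i).toNat) ((2:ℚ) • (1:A)),
        ← Nat.cast_smul_eq_nsmul ℚ (((N:ℤ) - i).toNat) ((2:ℚ) • (1:A)), e1, e2]
      module
    · rw [if_neg hij, if_neg fun h => hij h.symm]
      simp only [smul_zero, sub_zero, mul_two]
      module
  -- final assembly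
  unfold cubicDirac totalCurrent
  rw [add_mul, mul_add, smul_mul_assoc, mul_smul_comm]
  have rearr : ∀ p1 p2 c1 c2 : A,
      (p1 + (3:ℚ)⁻¹ • c1) + (p2 + (3:ℚ)⁻¹ • c2)
        = (p1 + p2) + (3:ℚ)⁻¹ • (c1 + c2) := by
    intro p1 p2 c1 c2; rw [smul_add]; abel
  rw [rearr, hEpart, hC, smul_smul]
  have h36 : (3:ℚ)⁻¹ * 6 = 2 := by norm_num
  rw [h36, mul_two]
  module
end
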